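/- arXiv:1305.4012 — 9 statements merged into one kernel-verified Lean document; each statement's English description precedes it below -/
import Mathlib

section
/- Let $a_1 \in (-1,0)$ and $a_2 \in (0,1)$. Define the domains $D_1 = \{(A_1,A_2) \in \mathbb{R}^2 : A_1 > 0,\ A_2 > 0,\ |A_1 - A_2| < A_1 a_2 - A_2 a_1\}$, $D_2^+ = \{(A_1,A_2) : A_1 > 0,\ A_2 > 0,\ |A_1 - A_2| \ge A_1 a_2 - A_2 a_1,\ A_1 > A_2\}$, and $D_2^- = \{(A_1,A_2) : A_1 > 0,\ A_2 > 0,\ |A_1 - A_2| \ge A_1 a_2 - A_2 a_1,\ A_2 > A_1\}$. Then $\frac{1}{4}\Big(\int_{D_1} e^{-\frac{A_1 a_2 - A_2 a_1}{a_2 - a_1}}\,dA + \int_{D_2^+} e^{-\frac{(A_1(a_2+1) - A_2(a_1+1))^2}{4(a_2-a_1)(A_1-A_2)}}\,dA + \int_{D_2^-} e^{-\frac{(A_2(1-a_1) - A_1(1-a_2))^2}{4(a_2-a_1)(A_2-A_1)}}\,dA\Big) = (a_2 - a_1)\Big(\frac{4}{3(1+a_2)^3} + \frac{4}{3(1-a_1)^3}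 + \frac{1}{6}\Big)$. -/
open Real MeasureTheory Set

lemma clm_det (a b c d : ℝ) :
    (((a • ContinuousLinearMap.fst ℝ ℝ ℝ + b • ContinuousLinearMap.snd ℝ ℝ ℝ)).prod
      (c • ContinuousLinearMap.fst ℝ ℝ ℝ + d • ContinuousLinearMap.snd ℝ ℝ ℝ)).det = a*d - b*c := by
  have : (((a • ContinuousLinearMap.fst ℝ ℝ ℝ + b • ContinuousLinearMap.snd ℝ ℝ ℝ)).prod
      (c • ContinuousLinearMap.fst ℝ ℝ ℝ + d • ContinuousLinearMap.snd ℝ ℝ ℝ) :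
      ℝ×ℝ →L[ℝ] ℝ×ℝ).det = LinearMap.det (((a • ContinuousLinearMap.fst ℝ ℝ ℝ + b • ContinuousLinearMap.snd ℝ ℝ ℝ)).prod
      (c • ContinuousLinearMap.fst ℝ ℝ ℝ + d • ContinuousLinearMap.snd ℝ ℝ ℝ) : ℝ×ℝ →ₗ[ℝ] ℝ×ℝ) := rfl
  rw [this, ← LinearMap.det_toMatrix (Module.Basis.finTwoProd ℝ)]
  rw [Matrix.det_fin_two]
  simp [LinearMap.toMatrix_apply, Module.Basis.finTwoProd_zero, Module.Basis.finTwoProd_one]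

-- derivative of one component

lemma cone_integral {m₁ m₂ : ℝ} (hm : m₁ < m₂) (f : ℝ → ℝ → ℝ)
    (hmeas : Measurable (Function.uncurry f))
    (hnn : ∀ x y, 0 ≤ f x y)
    (hsect : ∀ x, IntegrableOn (f x) (Ioo (m₁*x) (m₂*x)))
    (g : ℝ → ℝ) (hval : ∀ x, 0 < x → ∫ y in Ioo (m₁*x) (m₂*x), f x y = g x)
    (hg : IntegrableOn g (Ioi 0)) :
    ∫ p in {p : ℝ×ℝ | m₁*p.1 < p.2 ∧ p.2 < m₂*p.1}, f p.1 p.2 = ∫ x in Ioi 0, g x := by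
  have hE : MeasurableSet {p : ℝ×ℝ | m₁*p.1 < p.2 ∧ p.2 < m₂*p.1} := by
    apply MeasurableSet.inter
    · exact measurableSet_lt (measurable_fst.const_mul m₁) measurable_snd
    · exact measurableSet_lt measurable_snd (measurable_fst.const_mul m₂)
  set E := {p : ℝ×ℝ | m₁*p.1 < p.2 ∧ p.2 < m₂*p.1} with hEdef
  -- the indicator function
  set F : ℝ×ℝ → ℝ := E.indicator (fun p => f p.1 p.2) with hF
  have hFsect : ∀ x : ℝ, (fun y => F (x, y)) = (Ioo (m₁*x) (m₂*x)).indicator (f x) := by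
    intro x
    ext y
    simp only [hF, indicator, hEdef, mem_setOf_eq, mem_Ioo]
  have hempty : ∀ x : ℝ, x ≤ 0 → Ioo (m₁*x) (m₂*x) = ∅ := by
    intro x hx
    apply Ioo_eq_empty
    nlinarith
  have hinner : ∀ x : ℝ, ∫ y, F (x, y) = indicator (Ioi 0) g x := by
    intro x
    rw [hFsect]
    rcases le_or_gt x 0 with hx | hx
    · rw [hempty x hx]
      simp [indicator_of_notMem (by simpa using hx : x ∉ Ioi 0)]
    · rw [MeasureTheory.integral_indicator measurableSet_Ioo, hval x hx,
        indicator_of_mem (by simpa using hx)]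
  have hFmeas : AEStronglyMeasurable F ((volume : Measure ℝ).prod volume) := by
    have : Measurable F := (hmeas.comp measurable_id).indicator hE
    rw [← Measure.volume_eq_prod]
    exact this.aestronglyMeasurable
  have hFint : Integrable F ((volume : Measure ℝ).prod volume) := by
    rw [MeasureTheory.integrable_prod_iff hFmeas]
    constructor
    · filter_upwards with x
      rw [hFsect]
      rw [integrable_indicator_iff measurableSet_Ioo]
      exact hsect x
    · have : (fun x => ∫ y, ‖F (x, y)‖) = fun x => indicator (Ioi 0) g x := by
        ext x
        rw [← hinner x]
        congr 1
        ext y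
        rw [Real.norm_eq_abs, abs_of_nonneg]
        exact indicator_nonneg (fun p _ => hnn p.1 p.2) _
      rw [this]
      rw [integrable_indicator_iff measurableSet_Ioi]
      exact hg
  have : ∫ p in E, f p.1 p.2 = ∫ p : ℝ×ℝ, F p := by
    rw [hF, MeasureTheory.integral_indicator hE]
  rw [this]
  rw [Measure.volume_eq_prod, MeasureTheory.integral_prod _ hFint]
  simp_rw [hinner]
  rw [MeasureTheory.integral_indicator measurableSet_Ioi]

lemma exp_integrable {c : ℝ} (hc : 0 < c) :
    IntegrableOn (fun x => exp (-(c*x))) (Ioi (0:ℝ)) := by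
  simpa [neg_mul] using exp_neg_integrableOn_Ioi 0 hc

lemma exp_int {c : ℝ} (hc : 0 < c) : ∫ x in Ioi (0:ℝ), exp (-(c*x)) = 1/c := by
  have h : ∀ x ∈ Ioi (0:ℝ), HasDerivAt (fun x => -(1/c) * exp (-(c*x))) (exp (-(c*x))) x := by
    intro x _
    have h1 : HasDerivAt (fun x : ℝ => -(c*x)) (-c) x := by
      simpa using ((hasDerivAt_id x).const_mul (-c))
    have := (h1.exp).const_mul (-(1/c))
    refine this.congr_deriv ?_
    field_simp
  have htend : Filter.Tendsto (fun x : ℝ => -(1/c) * exp (-(c*x))) Filter.atTop (nhds 0) := by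
    have h2 : Filter.Tendsto (fun x : ℝ => exp ((-c)*x)) Filter.atTop (nhds 0) :=
      Real.tendsto_exp_atBot.comp (Filter.Tendsto.const_mul_atTop_of_neg (by linarith) Filter.tendsto_id)
    have h3 : Filter.Tendsto (fun x : ℝ => exp (-(c*x))) Filter.atTop (nhds 0) := by
      simpa [neg_mul] using h2
    simpa using h3.const_mul (-(1/c))
  have := integral_Ioi_of_hasDerivAt_of_nonneg
    (Continuous.continuousWithinAt (by continuity)) h (fun x _ => (exp_pos _).le) htend
  rw [this]; simp

lemma I1_val (a₁ a₂ : ℝ) (h₁ : a₁ ∈ Set.Ioo (-1:ℝ) 0) (h₂ : a₂ ∈ Set.Ioo (0:ℝ) 1) :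
    (∫ A in {A : ℝ × ℝ | 0 < A.1 ∧ 0 < A.2 ∧ |A.1 - A.2| < A.1 * a₂ - A.2 * a₁},
        Real.exp (-((A.1 * a₂ - A.2 * a₁) / (a₂ - a₁)))) = 2*(a₂-a₁) := by
  obtain ⟨ha₁m, ha₁0⟩ := h₁
  obtain ⟨ha₂0, ha₂1⟩ := h₂
  have hb : (0:ℝ) < a₂ - a₁ := by linarith
  have h1p : (0:ℝ) < 1 + a₁ := by linarith
  have h1m : (0:ℝ) < 1 - a₁ := by linarith
  have ha₁ : a₁ ≠ 0 := ne_of_lt ha₁0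
  have hlu : (1-a₂)/(1-a₁) < (1+a₂)/(1+a₁) := by
    have hl1 : (1-a₂)/(1-a₁) < 1 := by rw [div_lt_one h1m]; linarith
    have hu1 : 1 < (1+a₂)/(1+a₁) := by rw [lt_div_iff₀ h1p]; linarith
    linarith
  have hset : {A : ℝ × ℝ | 0 < A.1 ∧ 0 < A.2 ∧ |A.1 - A.2| < A.1 * a₂ - A.2 * a₁}
      = {p : ℝ×ℝ | (1-a₂)/(1-a₁)*p.1 < p.2 ∧ p.2 < (1+a₂)/(1+a₁)*p.1} := by
    ext ⟨x, y⟩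
    simp only [mem_setOf_eq, abs_sub_lt_iff]
    constructor
    · rintro ⟨hx, hy, hab1, hab2⟩
      constructor
      · rw [div_mul_eq_mul_div, div_lt_iff₀ h1m]; nlinarith
      · rw [div_mul_eq_mul_div, lt_div_iff₀ h1p]; nlinarith
    · rintro ⟨hl, hu⟩
      have hl' : (1-a₂)*x < (1-a₁)*y := by
        rw [div_mul_eq_mul_div, div_lt_iff₀ h1m] at hl; nlinarith
      have hu' : (1+a₁)*y < (1+a₂)*x := by
        rw [div_mul_eq_mul_div, lt_div_iff₀ h1p] at hu; nlinarith
      have hx : 0 < x := by nlinarith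
      have hy : 0 < y := by nlinarith
      exact ⟨hx, hy, by nlinarith, by nlinarith⟩
  rw [hset]
  have key := cone_integral hlu (fun x y => Real.exp (-((x * a₂ - y * a₁) / (a₂-a₁))))
    (by fun_prop)
    (fun x y => (exp_pos _).le)
    (fun x => ((Continuous.integrableOn_Icc (by fun_prop)).mono_set Ioo_subset_Icc_self))
    (fun x => (a₂-a₁)/a₁ * (exp (-((1/(1+a₁))*x)) - exp (-((1/(1-a₁))*x))))
    ?_ ?_
  · rw [key, MeasureTheory.integral_const_mul,
      MeasureTheory.integral_sub (exp_integrable (by positivity)) (exp_integrable (by positivity)),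
      exp_int (by positivity), exp_int (by positivity)]
    field_simp
    ring
  · -- hval
    intro x hx
    rw [← MeasureTheory.integral_Ioc_eq_integral_Ioo,
      ← intervalIntegral.integral_of_le (by nlinarith : (1-a₂)/(1-a₁)*x ≤ (1+a₂)/(1+a₁)*x)]
    have hftc : ∀ y ∈ uIcc ((1-a₂)/(1-a₁)*x) ((1+a₂)/(1+a₁)*x), HasDerivAt
        (fun y => (a₂-a₁)/a₁ * Real.exp (-((x * a₂ - y * a₁) / (a₂-a₁))))
        (Real.exp (-((x * a₂ - y * a₁) / (a₂-a₁)))) y := by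
      intro y _
      have h1 : HasDerivAt (fun y : ℝ => -((x * a₂ - y * a₁) / (a₂-a₁))) (a₁/(a₂-a₁)) y := by
        have : HasDerivAt (fun y : ℝ => (a₁/(a₂-a₁)) * y - x*a₂/(a₂-a₁)) (a₁/(a₂-a₁)) y := by
          simpa using ((hasDerivAt_id y).const_mul (a₁/(a₂-a₁))).sub_const (x*a₂/(a₂-a₁))
        convert this using 1
        ext y; field_simp; ring
      have := (h1.exp).const_mul ((a₂-a₁)/a₁)
      refine this.congr_deriv ?_
      field_simp
    rw [intervalIntegral.integral_eq_sub_of_hasDerivAt hftc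
      ((Continuous.intervalIntegrable (by fun_prop) _ _))]
    have e1 : -((x * a₂ - ((1+a₂)/(1+a₁)*x) * a₁) / (a₂-a₁)) = -((1/(1+a₁))*x) := by
      field_simp; ring
    have e2 : -((x * a₂ - ((1-a₂)/(1-a₁)*x) * a₁) / (a₂-a₁)) = -((1/(1-a₁))*x) := by
      field_simp; ring
    rw [e1, e2]
    ring
  · -- hg
    apply Integrable.const_mul
    exact ((exp_integrable (by positivity)).sub (exp_integrable (by positivity)))

lemma rexp1_deriv (r : ℝ) : HasDerivAt (fun r : ℝ => -((1+r) * exp (-r))) (r * exp (-r)) r := by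
  have he : HasDerivAt (fun r : ℝ => exp (-r)) (-exp (-r)) r := by
    simpa using ((hasDerivAt_id r).neg).exp
  have h1 : HasDerivAt (fun r : ℝ => 1 + r) 1 r := by
    simpa using (hasDerivAt_id r).const_add 1
  have := (h1.mul he).neg
  refine this.congr_deriv ?_
  ring

lemma rexp1_tendsto : Filter.Tendsto (fun r : ℝ => -((1+r) * exp (-r))) Filter.atTop (nhds 0) := by
  have t1 : Filter.Tendsto (fun r : ℝ => exp (-r)) Filter.atTop (nhds 0) :=
    Real.tendsto_exp_neg_atTop_nhds_zero
  have t2 : Filter.Tendsto (fun r : ℝ => r * exp (-r)) Filter.atTop (nhds 0) := by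
    simpa using Real.tendsto_pow_mul_exp_neg_atTop_nhds_zero 1
  have := (t1.add t2).neg
  simp only [add_zero, neg_zero] at this
  convert this using 2 with r
  ring

lemma rexp1_integrable : IntegrableOn (fun r : ℝ => r * exp (-r)) (Ioi (0:ℝ)) :=
  integrableOn_Ioi_deriv_of_nonneg (Continuous.continuousWithinAt (by continuity))
    (fun x _ => rexp1_deriv x) (fun x hx => mul_nonneg (le_of_lt (mem_Ioi.mp hx)) (exp_pos _).le) rexp1_tendsto

lemma rexp1_integral : ∫ r in Ioi (0:ℝ), r * exp (-r) = 1 := by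
  rw [integral_Ioi_of_hasDerivAt_of_nonneg (Continuous.continuousWithinAt (by continuity))
    (fun x _ => rexp1_deriv x) (fun x hx => mul_nonneg (le_of_lt (mem_Ioi.mp hx)) (exp_pos _).le) rexp1_tendsto]
  simp

noncomputable def Phi (k₁ k₂ : ℝ) : ℝ×ℝ → ℝ×ℝ := fun p =>
  (p.2*(1/(k₂-k₁)) - (k₁/(4*(k₂-k₁)^2)) * (p.2*p.2 * p.1⁻¹),
   p.2*(1/(k₂-k₁)) - (k₂/(4*(k₂-k₁)^2)) * (p.2*p.2 * p.1⁻¹))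

lemma Phi_e1 {k₁ k₂ : ℝ} {p : ℝ×ℝ} (hx : p.1 ≠ 0) (hb : k₂ - k₁ ≠ 0) :
    k₂ * (Phi k₁ k₂ p).1 - k₁ * (Phi k₁ k₂ p).2 = p.2 := by
  simp only [Phi]; field_simp; ring

lemma Phi_e2 {k₁ k₂ : ℝ} {p : ℝ×ℝ} (hx : p.1 ≠ 0) (hb : k₂ - k₁ ≠ 0) :
    (Phi k₁ k₂ p).1 - (Phi k₁ k₂ p).2 = p.2^2/(4*(k₂-k₁)*p.1) := by
  simp only [Phi]; field_simp; ring

noncomputable def PhiD (k₁ k₂ : ℝ) (p : ℝ×ℝ) : ℝ×ℝ →L[ℝ] ℝ×ℝ :=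
  ((k₁*p.2^2/(4*(k₂-k₁)^2*p.1^2)) • ContinuousLinearMap.fst ℝ ℝ ℝ
    + (1/(k₂-k₁) - k₁*p.2/(2*(k₂-k₁)^2*p.1)) • ContinuousLinearMap.snd ℝ ℝ ℝ).prod
  ((k₂*p.2^2/(4*(k₂-k₁)^2*p.1^2)) • ContinuousLinearMap.fst ℝ ℝ ℝ
    + (1/(k₂-k₁) - k₂*p.2/(2*(k₂-k₁)^2*p.1)) • ContinuousLinearMap.snd ℝ ℝ ℝ)

lemma Phi_component_deriv (b k : ℝ) (hb : b ≠ 0) (p : ℝ×ℝ) (hx : p.1 ≠ 0) :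
    HasFDerivAt (fun p : ℝ×ℝ => p.2*(1/b) - (k/(4*b^2)) * (p.2*p.2 * p.1⁻¹))
      (((k*p.2^2/(4*b^2*p.1^2)) • ContinuousLinearMap.fst ℝ ℝ ℝ
        + (1/b - k*p.2/(2*b^2*p.1)) • ContinuousLinearMap.snd ℝ ℝ ℝ)) p := by
  have h1 : HasFDerivAt (fun p : ℝ×ℝ => p.1) (ContinuousLinearMap.fst ℝ ℝ ℝ) p := hasFDerivAt_fst
  have h2 : HasFDerivAt (fun p : ℝ×ℝ => p.2) (ContinuousLinearMap.snd ℝ ℝ ℝ) p := hasFDerivAt_snd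
  have hsq : HasFDerivAt (fun p : ℝ×ℝ => p.2*p.2 * p.1⁻¹) _ p :=
    (h2.mul h2).mul ((hasFDerivAt_inv' hx).comp p h1)
  have hD := (h2.mul_const (1/b)).sub (hsq.const_mul (k/(4*b^2)))
  apply hD.congr_fderiv
  refine ContinuousLinearMap.ext fun v => ?_
  simp only [ContinuousLinearMap.add_apply, ContinuousLinearMap.smul_apply,
    ContinuousLinearMap.coe_fst', ContinuousLinearMap.coe_snd',
    ContinuousLinearMap.sub_apply, smul_eq_mul, ContinuousLinearMap.coe_comp',
    Function.comp_apply, ContinuousLinearMap.neg_apply,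
    ContinuousLinearMap.mulLeftRight_apply, Pi.mul_apply]
  field_simp
  ring

lemma Phi_hasFDerivAt (k₁ k₂ : ℝ) (hb : k₂ - k₁ ≠ 0) (p : ℝ×ℝ) (hx : p.1 ≠ 0) :
    HasFDerivAt (Phi k₁ k₂) (PhiD k₁ k₂ p) p :=
  HasFDerivAt.prodMk (Phi_component_deriv (k₂-k₁) k₁ hb p hx)
    (Phi_component_deriv (k₂-k₁) k₂ hb p hx)

lemma PhiD_det (k₁ k₂ : ℝ) (hb : k₂ - k₁ ≠ 0) (p : ℝ×ℝ) (hx : p.1 ≠ 0) :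
    |(PhiD k₁ k₂ p).det| = p.2^2/(4*(k₂-k₁)^2*p.1^2) := by
  rw [PhiD, clm_det]
  have : (k₁*p.2^2/(4*(k₂-k₁)^2*p.1^2)) * (1/(k₂-k₁) - k₂*p.2/(2*(k₂-k₁)^2*p.1))
      - (1/(k₂-k₁) - k₁*p.2/(2*(k₂-k₁)^2*p.1)) * (k₂*p.2^2/(4*(k₂-k₁)^2*p.1^2))
      = -(p.2^2/(4*(k₂-k₁)^2*p.1^2)) := by
    field_simp
    ring
  rw [this, abs_neg, abs_of_nonneg (by positivity)]

section
variable {k₁ k₂ : ℝ} (hk₁ : 0 < k₁) (hkk : k₁ < k₂) (hk₂ : k₂ < 2)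
include hk₁ hkk hk₂

lemma S_facts {p : ℝ×ℝ} (hp : 2*(k₂-k₁)*p.1 < p.2 ∧ p.2 < 4*(k₂-k₁)/k₂*p.1) :
    0 < p.1 ∧ 0 < p.2 ∧ k₂*p.2 < 4*(k₂-k₁)*p.1 := by
  have hb : (0:ℝ) < k₂ - k₁ := by linarith
  have hk₂0 : (0:ℝ) < k₂ := by linarith
  obtain ⟨h1, h2⟩ := hp
  have h2' : k₂ * p.2 < 4*(k₂-k₁)*p.1 := by
    rw [div_mul_eq_mul_div, lt_div_iff₀ hk₂0] at h2; linarith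
  have hcoef : 0 < 4*(k₂-k₁) - 2*(k₂-k₁)*k₂ := by nlinarith
  have hkey : 0 < (4*(k₂-k₁) - 2*(k₂-k₁)*k₂) * p.1 := by
    nlinarith [mul_lt_mul_of_pos_left h1 hk₂0]
  have hr : 0 < p.1 := by
    by_contra hc
    push_neg at hc
    nlinarith
  have ht : 0 < p.2 := by nlinarith
  exact ⟨hr, ht, h2'⟩

lemma Phi_mem {p : ℝ×ℝ} (hp : 2*(k₂-k₁)*p.1 < p.2 ∧ p.2 < 4*(k₂-k₁)/k₂*p.1) :
    0 < (Phi k₁ k₂ p).2 ∧ (2-k₁)*(Phi k₁ k₂ p).2 < (2-k₂)*(Phi k₁ k₂ p).1 := by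
  have hb : (0:ℝ) < k₂ - k₁ := by linarith
  obtain ⟨hr, ht, h2'⟩ := S_facts hk₁ hkk hk₂ hp
  obtain ⟨h1, _⟩ := hp
  constructor
  · have he : (Phi k₁ k₂ p).2 = (p.2*(4*(k₂-k₁)*p.1 - k₂*p.2))/(4*(k₂-k₁)^2*p.1) := by
      simp only [Phi]
      field_simp
    rw [he]
    apply div_pos (by nlinarith) (by positivity)
  · have he : (2-k₂)*(Phi k₁ k₂ p).1 - (2-k₁)*(Phi k₁ k₂ p).2
        = (p.2*(p.2 - 2*(k₂-k₁)*p.1))/(2*(k₂-k₁)*p.1) := by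
      simp only [Phi]
      field_simp
      ring
    have h0 : 0 < (p.2*(p.2 - 2*(k₂-k₁)*p.1))/(2*(k₂-k₁)*p.1) :=
      div_pos (by nlinarith) (by positivity)
    linarith [he ▸ h0]

lemma Phi_image :
    {p : ℝ×ℝ | 0 < p.2 ∧ (2-k₁)*p.2 < (2-k₂)*p.1}
      = Phi k₁ k₂ '' {p : ℝ×ℝ | 2*(k₂-k₁)*p.1 < p.2 ∧ p.2 < 4*(k₂-k₁)/k₂*p.1} := by
  have hb : (0:ℝ) < k₂ - k₁ := by linarith
  have hk₂0 : (0:ℝ) < k₂ := by linarith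
  ext ⟨x, y⟩
  simp only [mem_setOf_eq, mem_image]
  constructor
  · rintro ⟨hy, hxy⟩
    have hyx : y < x := by nlinarith
    have hx : 0 < x := by nlinarith
    have hs : 0 < x - y := by linarith
    have ht : 0 < k₂*x - k₁*y := by nlinarith
    refine ⟨((k₂*x - k₁*y)^2/(4*(k₂-k₁)*(x-y)), k₂*x - k₁*y), ⟨?_, ?_⟩, ?_⟩
    · have e : 2*(k₂-k₁)*(((k₂*x - k₁*y)^2/(4*(k₂-k₁)*(x-y)), k₂*x - k₁*y) : ℝ×ℝ).1
          = (k₂*x-k₁*y)^2/(2*(x-y)) := by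
        field_simp; ring
      rw [e, div_lt_iff₀ (by linarith)]
      nlinarith [mul_pos ht (show (0:ℝ) < (2-k₂)*x - (2-k₁)*y by linarith)]
    · have e : 4*(k₂-k₁)/k₂*(((k₂*x - k₁*y)^2/(4*(k₂-k₁)*(x-y)), k₂*x - k₁*y) : ℝ×ℝ).1
          = (k₂*x-k₁*y)^2/(k₂*(x-y)) := by
        field_simp
      rw [e, lt_div_iff₀ (by positivity)]
      nlinarith [mul_pos ht (mul_pos hb hy)]
    · have hts : (k₂*x - k₁*y) ≠ 0 := ne_of_gt ht
      have hss : (x - y) ≠ 0 := ne_of_gt hs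
      simp only [Phi, Prod.mk.injEq]
      constructor
      · field_simp
        ring
      · field_simp
        ring
  · rintro ⟨⟨r, t⟩, hrt, hPhi⟩
    obtain ⟨hA, hB⟩ := Phi_mem hk₁ hkk hk₂ hrt
    rw [hPhi] at hA hB
    exact ⟨hA, hB⟩

lemma Phi_injOn :
    InjOn (Phi k₁ k₂) {p : ℝ×ℝ | 2*(k₂-k₁)*p.1 < p.2 ∧ p.2 < 4*(k₂-k₁)/k₂*p.1} := by
  have hb : (0:ℝ) < k₂ - k₁ := by linarith
  rintro p hp q hq h
  obtain ⟨hpr, hpt, _⟩ := S_facts hk₁ hkk hk₂ hp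
  obtain ⟨hqr, hqt, _⟩ := S_facts hk₁ hkk hk₂ hq
  have e1p := Phi_e1 (k₁ := k₁) (k₂ := k₂) (p := p) (ne_of_gt hpr) (ne_of_gt hb)
  have e1q := Phi_e1 (k₁ := k₁) (k₂ := k₂) (p := q) (ne_of_gt hqr) (ne_of_gt hb)
  have e2p := Phi_e2 (k₁ := k₁) (k₂ := k₂) (p := p) (ne_of_gt hpr) (ne_of_gt hb)
  have e2q := Phi_e2 (k₁ := k₁) (k₂ := k₂) (p := q) (ne_of_gt hqr) (ne_of_gt hb)
  have ht : p.2 = q.2 := by rw [← e1p, ← e1q, h]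
  have h2 : p.2^2/(4*(k₂-k₁)*p.1) = p.2^2/(4*(k₂-k₁)*q.1) := by
    rw [← e2p, h, e2q, ht]
  have hr : p.1 = q.1 := by
    field_simp at h2
    linarith
  exact Prod.ext_iff.mpr ⟨hr, ht⟩
end

lemma core (k₁ k₂ : ℝ) (hk₁ : 0 < k₁) (hkk : k₁ < k₂) (hk₂ : k₂ < 2) :
    ∫ p in {p : ℝ×ℝ | 0 < p.2 ∧ (2-k₁)*p.2 < (2-k₂)*p.1},
      Real.exp (-((p.1*k₂ - p.2*k₁)^2/(4*(k₂-k₁)*(p.1-p.2))))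
    = (k₂-k₁)*(16/(3*k₂^3) - 2/3) := by
  have hb : (0:ℝ) < k₂ - k₁ := by linarith
  have hk₂0 : (0:ℝ) < k₂ := by linarith
  have hS : MeasurableSet {p : ℝ×ℝ | 2*(k₂-k₁)*p.1 < p.2 ∧ p.2 < 4*(k₂-k₁)/k₂*p.1} := by
    apply MeasurableSet.inter
    · exact measurableSet_lt (measurable_fst.const_mul _) measurable_snd
    · exact measurableSet_lt measurable_snd (measurable_fst.const_mul _)
  rw [Phi_image hk₁ hkk hk₂]
  rw [integral_image_eq_integral_abs_det_fderiv_smul volume hS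
    (fun p hp => ((Phi_hasFDerivAt k₁ k₂ (ne_of_gt hb) p
      (ne_of_gt (S_facts hk₁ hkk hk₂ hp).1)).hasFDerivWithinAt))
    (Phi_injOn hk₁ hkk hk₂)]
  have hcong : ∀ p ∈ {p : ℝ×ℝ | 2*(k₂-k₁)*p.1 < p.2 ∧ p.2 < 4*(k₂-k₁)/k₂*p.1},
      |(PhiD k₁ k₂ p).det| • Real.exp (-(((Phi k₁ k₂ p).1*k₂ - (Phi k₁ k₂ p).2*k₁)^2
        /(4*(k₂-k₁)*((Phi k₁ k₂ p).1-(Phi k₁ k₂ p).2))))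
      = (fun r t => t^2/(4*(k₂-k₁)^2*r^2) * Real.exp (-r)) p.1 p.2 := by
    intro p hp
    obtain ⟨hpr, hpt, _⟩ := S_facts hk₁ hkk hk₂ hp
    have e1 := Phi_e1 (k₁ := k₁) (k₂ := k₂) (p := p) (ne_of_gt hpr) (ne_of_gt hb)
    have e2 := Phi_e2 (k₁ := k₁) (k₂ := k₂) (p := p) (ne_of_gt hpr) (ne_of_gt hb)
    have harg : ((Phi k₁ k₂ p).1*k₂ - (Phi k₁ k₂ p).2*k₁)^2
        /(4*(k₂-k₁)*((Phi k₁ k₂ p).1-(Phi k₁ k₂ p).2)) = p.1 := by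
      have hnum : (Phi k₁ k₂ p).1*k₂ - (Phi k₁ k₂ p).2*k₁ = p.2 := by linarith
      rw [hnum, e2]
      field_simp
    rw [harg, PhiD_det k₁ k₂ (ne_of_gt hb) p (ne_of_gt hpr), smul_eq_mul]
  rw [MeasureTheory.setIntegral_congr_fun hS hcong]
  have hm : 2*(k₂-k₁) < 4*(k₂-k₁)/k₂ := by
    rw [lt_div_iff₀ hk₂0]; nlinarith
  have key := cone_integral hm (fun r t => t^2/(4*(k₂-k₁)^2*r^2) * Real.exp (-r))
    (show Measurable fun p : ℝ×ℝ => p.2^2/(4*(k₂-k₁)^2*p.1^2) * rexp (-p.1) from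
      ((measurable_snd.pow_const 2).div
        ((measurable_fst.pow_const 2).const_mul (4*(k₂-k₁)^2))).mul
        (measurable_fst.neg.exp))
    (fun r t => by positivity)
    (fun r => ((Continuous.integrableOn_Icc (by fun_prop)).mono_set Ioo_subset_Icc_self))
    (fun r => ((k₂-k₁)*(16/(3*k₂^3) - 2/3)) * (r * exp (-r)))
    ?_ (rexp1_integrable.const_mul _)
  · rw [key, MeasureTheory.integral_const_mul, rexp1_integral, mul_one]
  · intro r hr
    have hle : 2*(k₂-k₁)*r ≤ 4*(k₂-k₁)/k₂*r := le_of_lt (by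
      exact mul_lt_mul_of_pos_right hm hr)
    rw [← MeasureTheory.integral_Ioc_eq_integral_Ioo, ← intervalIntegral.integral_of_le hle]
    simp_rw [show ∀ t:ℝ, t^2/(4*(k₂-k₁)^2*r^2)*exp (-r) = (exp (-r)/(4*(k₂-k₁)^2*r^2)) * t^2
      from fun t => by ring]
    rw [intervalIntegral.integral_const_mul, integral_pow]
    push_cast
    field_simp
    ring

lemma line_null (c₁ c₂ : ℝ) (h : c₁ ≠ 0) :
    volume {p : ℝ×ℝ | c₁ * p.2 = c₂ * p.1} = 0 := by
  have hset : {p : ℝ×ℝ | c₁ * p.2 = c₂ * p.1}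
      = (LinearMap.ker ((c₁ • LinearMap.snd ℝ ℝ ℝ) - (c₂ • LinearMap.fst ℝ ℝ ℝ)) : Set (ℝ×ℝ)) := by
    ext p
    simp [LinearMap.mem_ker, sub_eq_zero]
  rw [hset]
  apply Measure.addHaar_submodule
  intro htop
  have h01 : ((0:ℝ),(1:ℝ)) ∈ LinearMap.ker ((c₁ • LinearMap.snd ℝ ℝ ℝ) - (c₂ • LinearMap.fst ℝ ℝ ℝ)) := by
    rw [htop]; trivial
  rw [LinearMap.mem_ker] at h01
  simp at h01
  exact h h01

lemma ae_set_eq (a₁ a₂ : ℝ) (h₁ : a₁ ∈ Set.Ioo (-1:ℝ) 0) (h₂ : a₂ ∈ Set.Ioo (0:ℝ) 1) :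
    {A : ℝ×ℝ | 0 < A.1 ∧ 0 < A.2 ∧ A.1*a₂ - A.2*a₁ ≤ |A.1-A.2| ∧ A.2 < A.1}
      =ᵐ[volume] {p : ℝ×ℝ | 0 < p.2 ∧ (1-a₁)*p.2 < (1-a₂)*p.1} := by
  obtain ⟨ha₁m, ha₁0⟩ := h₁
  obtain ⟨ha₂0, ha₂1⟩ := h₂
  have h1m : (0:ℝ) < 1 - a₁ := by linarith
  have h2m : (0:ℝ) < 1 - a₂ := by linarith
  rw [MeasureTheory.ae_eq_set]
  constructor
  · apply measure_mono_null _ (line_null (1-a₁) (1-a₂) (ne_of_gt h1m))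
    rintro ⟨x,y⟩ ⟨⟨hx,hy,habs,hyx⟩, hnot⟩
    simp only [mem_setOf_eq, not_and, not_lt] at hnot ⊢
    rw [abs_of_nonneg (by simp only [] at hyx ⊢; linarith : (0:ℝ) ≤ x - y)] at habs
    have hle : (1-a₁)*y ≤ (1-a₂)*x := by simp only [] at *; linarith
    exact le_antisymm hle (hnot hy)
  · have : {p : ℝ×ℝ | 0 < p.2 ∧ (1-a₁)*p.2 < (1-a₂)*p.1}
        \ {A : ℝ×ℝ | 0 < A.1 ∧ 0 < A.2 ∧ A.1*a₂ - A.2*a₁ ≤ |A.1-A.2| ∧ A.2 < A.1} = ∅ := by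
      rw [diff_eq_empty]
      rintro ⟨x,y⟩ ⟨hy, hxy⟩
      simp only [mem_setOf_eq] at *
      have hx : 0 < x := by nlinarith
      have hyx : y < x := by nlinarith
      refine ⟨hx, hy, ?_, hyx⟩
      rw [abs_of_nonneg (by linarith : (0:ℝ) ≤ x - y)]
      nlinarith
    rw [this]
    simp

lemma I2_val (a₁ a₂ : ℝ) (h₁ : a₁ ∈ Set.Ioo (-1:ℝ) 0) (h₂ : a₂ ∈ Set.Ioo (0:ℝ) 1) :
    (∫ A in {A : ℝ × ℝ | 0 < A.1 ∧ 0 < A.2 ∧ A.1 * a₂ - A.2 * a₁ ≤ |A.1 - A.2| ∧ A.2 < A.1},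
        Real.exp (-((A.1 * (a₂ + 1) - A.2 * (a₁ + 1)) ^ 2 /
          (4 * (a₂ - a₁) * (A.1 - A.2)))))
      = (a₂-a₁) * (16/(3*(a₂+1)^3) - 2/3) := by
  obtain ⟨ha₁m, ha₁0⟩ := h₁
  obtain ⟨ha₂0, ha₂1⟩ := h₂
  have hcore := core (a₁+1) (a₂+1) (by linarith) (by linarith) (by linarith)
  rw [show ((a₂+1)-(a₁+1):ℝ) = a₂-a₁ by ring, show ((2:ℝ)-(a₁+1)) = 1-a₁ by ring,
    show ((2:ℝ)-(a₂+1)) = 1-a₂ by ring] at hcore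
  rw [MeasureTheory.setIntegral_congr_set (ae_set_eq a₁ a₂ ⟨ha₁m, ha₁0⟩ ⟨ha₂0, ha₂1⟩)]
  exact hcore

lemma I3_val (a₁ a₂ : ℝ) (h₁ : a₁ ∈ Set.Ioo (-1:ℝ) 0) (h₂ : a₂ ∈ Set.Ioo (0:ℝ) 1) :
    (∫ A in {A : ℝ × ℝ | 0 < A.1 ∧ 0 < A.2 ∧ A.1 * a₂ - A.2 * a₁ ≤ |A.1 - A.2| ∧ A.1 < A.2},
        Real.exp (-((A.2 * (1 - a₁) - A.1 * (1 - a₂)) ^ 2 /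
          (4 * (a₂ - a₁) * (A.2 - A.1)))))
      = (a₂-a₁) * (16/(3*(1-a₁)^3) - 2/3) := by
  have key := I2_val (-a₂) (-a₁) ⟨by linarith [h₂.2], by linarith [h₂.1]⟩
    ⟨by linarith [h₁.2], by linarith [h₁.1]⟩
  have hmp : MeasurePreserving (Prod.swap : ℝ×ℝ → ℝ×ℝ) volume volume := by
    rw [Measure.volume_eq_prod]
    exact Measure.measurePreserving_swap
  have hswap := MeasurePreserving.setIntegral_preimage_emb hmp
    (MeasurableEquiv.prodComm (α := ℝ) (β := ℝ)).measurableEmbedding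
    (fun A : ℝ×ℝ => Real.exp (-((A.1 * ((-a₁) + 1) - A.2 * ((-a₂) + 1)) ^ 2 /
      (4 * ((-a₁) - (-a₂)) * (A.1 - A.2)))))
    {A : ℝ × ℝ | 0 < A.1 ∧ 0 < A.2 ∧ A.1 * (-a₁) - A.2 * (-a₂) ≤ |A.1 - A.2| ∧ A.2 < A.1}
  rw [key] at hswap
  rw [show (a₂-a₁ : ℝ) = (-a₁) - (-a₂) by ring, show ((1:ℝ)-a₁) = (-a₁)+1 by ring,
    show ((1:ℝ)-a₂) = (-a₂)+1 by ring]
  rw [← hswap]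
  have hsets : (Prod.swap : ℝ×ℝ → ℝ×ℝ) ⁻¹'
      {A : ℝ × ℝ | 0 < A.1 ∧ 0 < A.2 ∧ A.1 * (-a₁) - A.2 * (-a₂) ≤ |A.1 - A.2| ∧ A.2 < A.1}
      = {A : ℝ × ℝ | 0 < A.1 ∧ 0 < A.2 ∧ A.1 * a₂ - A.2 * a₁ ≤ |A.1 - A.2| ∧ A.1 < A.2} := by
    ext ⟨x, y⟩
    simp only [mem_preimage, Prod.swap_prod_mk, mem_setOf_eq]
    constructor
    · rintro ⟨hy, hx, habs, hxy⟩
      refine ⟨hx, hy, ?_, hxy⟩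
      rw [abs_sub_comm] at habs
      linarith
    · rintro ⟨hx, hy, habs, hxy⟩
      refine ⟨hy, hx, ?_, hxy⟩
      rw [abs_sub_comm]
      linarith
  rw [hsets]
  rfl

theorem support_interval_density (a₁ a₂ : ℝ)
    (h₁ : a₁ ∈ Set.Ioo (-1 : ℝ) 0) (h₂ : a₂ ∈ Set.Ioo (0 : ℝ) 1) :
    (1 / 4) *
      ((∫ A in {A : ℝ × ℝ | 0 < A.1 ∧ 0 < A.2 ∧ |A.1 - A.2| < A.1 * a₂ - A.2 * a₁},
          Real.exp (-((A.1 * a₂ - A.2 * a₁) / (a₂ - a₁))))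
        + (∫ A in {A : ℝ × ℝ | 0 < A.1 ∧ 0 < A.2 ∧ A.1 * a₂ - A.2 * a₁ ≤ |A.1 - A.2| ∧ A.2 < A.1},
            Real.exp (-((A.1 * (a₂ + 1) - A.2 * (a₁ + 1)) ^ 2 /
              (4 * (a₂ - a₁) * (A.1 - A.2)))))
        + (∫ A in {A : ℝ × ℝ | 0 < A.1 ∧ 0 < A.2 ∧ A.1 * a₂ - A.2 * a₁ ≤ |A.1 - A.2| ∧ A.1 < A.2},
            Real.exp (-((A.2 * (1 - a₁) - A.1 * (1 - a₂)) ^ 2 /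
              (4 * (a₂ - a₁) * (A.2 - A.1))))))
      = (a₂ - a₁) * (4 / (3 * (1 + a₂) ^ 3) + 4 / (3 * (1 - a₁) ^ 3) + 1 / 6) := by
  rw [I1_val a₁ a₂ h₁ h₂, I2_val a₁ a₂ h₁ h₂, I3_val a₁ a₂ h₁ h₂]
  have h2p : (1:ℝ) + a₂ ≠ 0 := by have := h₂.1; intro h; linarith
  have h1m : (1:ℝ) - a₁ ≠ 0 := by have := h₁.2; intro h; linarith
  have h2p' : (a₂:ℝ) + 1 ≠ 0 := by have := h₂.1; intro h; linarith
  field_simp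
  ring
end

section
/- Let $a_1 \in (-1,0)$ and $a_2 \in (0,1)$, and let $D_1 = \{(A_1,A_2) \in \mathbb{R}^2 : A_1 > 0,\ A_2 > 0,\ |A_1 - A_2| < A_1 a_2 - A_2 a_1\}$. Then $\int_{D_1} e^{-\frac{A_1 a_2 - A_2 a_1}{a_2 - a_1}}\,dA_1\,dA_2 = 2(a_2 - a_1)$. -/
open Real MeasureTheory Set

lemma exp_mul_intervalIntegral (k u v : ℝ) (hk : k ≠ 0) :
    ∫ y in u..v, Real.exp (k*y) = (Real.exp (k*v) - Real.exp (k*u))/k := by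
  rw [intervalIntegral.integral_comp_mul_left (fun y => Real.exp y) hk, integral_exp,
    smul_eq_mul]
  ring

lemma exp_neg_mul_Ioi' {b : ℝ} (hb : 0 < b) :
    ∫ x in Ioi (0:ℝ), Real.exp (-(b*x)) = 1/b := by
  have := integral_comp_mul_left_Ioi (fun x => Real.exp (-x)) 0 hb
  simp only [mul_zero, integral_exp_neg_Ioi, neg_zero, Real.exp_zero, smul_eq_mul, mul_one] at this
  simpa [one_div] using this

theorem integral_Q1 (a₁ a₂ : ℝ)
    (h₁ : a₁ ∈ Set.Ioo (-1 : ℝ) 0) (h₂ : a₂ ∈ Set.Ioo (0 : ℝ) 1) :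
    (∫ A in {A : ℝ × ℝ | 0 < A.1 ∧ 0 < A.2 ∧ |A.1 - A.2| < A.1 * a₂ - A.2 * a₁},
        Real.exp (-((A.1 * a₂ - A.2 * a₁) / (a₂ - a₁))))
      = 2 * (a₂ - a₁) := by
  obtain ⟨ha1l, ha1r⟩ := h₁
  obtain ⟨ha2l, ha2r⟩ := h₂
  set c := a₂ - a₁ with hc_def
  have hc : 0 < c := by rw [hc_def]; linarith
  have ha₁ : a₁ ≠ 0 := ne_of_lt ha1r
  set α : ℝ := (1 - a₂) / (1 - a₁) with hα_def
  set β : ℝ := (1 + a₂) / (1 + a₁) with hβ_def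
  have h1a₁ : (0:ℝ) < 1 - a₁ := by linarith
  have h1a₁' : (0:ℝ) < 1 + a₁ := by linarith
  have h1a₂ : (0:ℝ) < 1 - a₂ := by linarith
  have h1a₂' : (0:ℝ) < 1 + a₂ := by linarith
  have hα : 0 < α := div_pos h1a₂ h1a₁
  have hβ : 0 < β := div_pos h1a₂' h1a₁'
  have hαβ : α < β := by
    rw [hα_def, hβ_def, div_lt_div_iff₀ h1a₁ h1a₁']
    nlinarith
  set S : Set (ℝ × ℝ) := {A : ℝ × ℝ | 0 < A.1 ∧ A.2 ∈ Set.Ioo (α * A.1) (β * A.1)} with hS_def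
  set f : ℝ × ℝ → ℝ := fun A => Real.exp (-((A.1 * a₂ - A.2 * a₁) / c)) with hf_def
  -- rewrite the set
  have hset : {A : ℝ × ℝ | 0 < A.1 ∧ 0 < A.2 ∧ |A.1 - A.2| < A.1 * a₂ - A.2 * a₁} = S := by
    ext ⟨x, y⟩
    simp only [hS_def, Set.mem_setOf_eq, abs_lt, Set.mem_Ioo]
    constructor
    · rintro ⟨hx, hy, hl, hr⟩
      refine ⟨hx, ?_, ?_⟩
      · rw [hα_def, div_mul_eq_mul_div, div_lt_iff₀ h1a₁]; nlinarith
      · rw [hβ_def, div_mul_eq_mul_div, lt_div_iff₀ h1a₁']; nlinarith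
    · rintro ⟨hx, hl, hr⟩
      rw [hα_def, div_mul_eq_mul_div, div_lt_iff₀ h1a₁] at hl
      rw [hβ_def, div_mul_eq_mul_div, lt_div_iff₀ h1a₁'] at hr
      refine ⟨hx, by nlinarith, by nlinarith, by nlinarith⟩
  have hS : MeasurableSet S := by
    apply MeasurableSet.inter (measurableSet_lt measurable_const measurable_fst)
    exact (measurableSet_lt (measurable_fst.const_mul α) measurable_snd).inter
      (measurableSet_lt measurable_snd (measurable_fst.const_mul β))
  -- integrability
  set m : ℝ := min a₂ (-a₁) with hm_def
  have hm : 0 < m := lt_min ha2l (by linarith)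
  set g : ℝ × ℝ → ℝ := fun A =>
      (Ioi (0:ℝ)).indicator (fun x => Real.exp (-(m/c*x))) A.1 *
      (Ioi (0:ℝ)).indicator (fun x => Real.exp (-(m/c*x))) A.2 with hg_def
  have hgi : Integrable g (volume.prod volume) := by
    have h1 : Integrable ((Ioi (0:ℝ)).indicator (fun x => Real.exp (-(m/c*x)))) volume := by
      rw [integrable_indicator_iff measurableSet_Ioi]
      exact (exp_neg_integrableOn_Ioi 0 (div_pos hm hc)).congr_fun
        (fun x _ => by dsimp only; rw [neg_mul]) measurableSet_Ioi
    exact h1.mul_prod h1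
  have hfi : Integrable (S.indicator f) (volume.prod volume) := by
    refine hgi.mono' ?_ ?_
    · exact (Continuous.aestronglyMeasurable (by fun_prop)).indicator hS
    · refine Filter.Eventually.of_forall fun A => ?_
      rw [Real.norm_eq_abs]
      by_cases hA : A ∈ S
      · obtain ⟨hx, hy1, hy2⟩ := id hA
        have hy : 0 < A.2 := lt_trans (by positivity) hy1
        rw [indicator_of_mem hA, abs_of_pos (Real.exp_pos _), hg_def]
        simp only
        rw [indicator_of_mem (mem_Ioi.2 hx), indicator_of_mem (mem_Ioi.2 hy), ← Real.exp_add]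
        apply Real.exp_le_exp.2
        have h1 : m * A.1 ≤ a₂ * A.1 := mul_le_mul_of_nonneg_right (min_le_left _ _) hx.le
        have h2 : m * A.2 ≤ -a₁ * A.2 := mul_le_mul_of_nonneg_right (min_le_right _ _) hy.le
        rw [div_mul_eq_mul_div, div_mul_eq_mul_div, ← neg_div, ← neg_div, ← neg_div,
          ← add_div, div_le_div_iff_of_pos_right hc]
        nlinarith
      · rw [indicator_of_notMem hA, abs_zero, hg_def]
        exact mul_nonneg (indicator_nonneg (fun x _ => (Real.exp_pos _).le) _)
          (indicator_nonneg (fun x _ => (Real.exp_pos _).le) _)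
  -- inner integral
  set F : ℝ → ℝ := fun x => (c/a₁) * (Real.exp (-(x/(1+a₁))) - Real.exp (-(x/(1-a₁)))) with hF_def
  have hinner : ∀ x : ℝ, (∫ y, S.indicator f (x, y)) = (Ioi (0:ℝ)).indicator F x := by
    intro x
    rcases le_or_gt x 0 with hx | hx
    · have h0 : ∀ y : ℝ, S.indicator f (x, y) = 0 := by
        intro y
        apply indicator_of_notMem
        rw [hS_def, Set.mem_setOf_eq]
        push_neg
        intro h
        exact absurd h (not_lt.2 hx)
      simp only [h0, integral_zero]
      rw [indicator_of_notMem (by simpa using hx : x ∉ Ioi (0:ℝ))]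
    · have h0 : ∀ y : ℝ, S.indicator f (x, y)
          = (Ioo (α*x) (β*x)).indicator (fun y => Real.exp (-((x * a₂ - y * a₁) / c))) y := by
        intro y
        by_cases hy : y ∈ Ioo (α*x) (β*x)
        · rw [indicator_of_mem (show (x,y) ∈ S from ⟨hx, hy⟩), indicator_of_mem hy]
        · rw [indicator_of_notMem (show (x,y) ∉ S from fun h => hy h.2),
            indicator_of_notMem hy]
      rw [indicator_of_mem (mem_Ioi.2 hx)]
      simp only [h0]
      rw [integral_indicator measurableSet_Ioo, ← integral_Ioc_eq_integral_Ioo,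
        ← intervalIntegral.integral_of_le (by nlinarith : α*x ≤ β*x)]
      have hk : a₁ / c ≠ 0 := div_ne_zero ha₁ hc.ne'
      have hexp : ∀ y : ℝ, Real.exp (-((x * a₂ - y * a₁) / c))
          = Real.exp (-(x*a₂)/c) * Real.exp (a₁/c * y) := by
        intro y
        rw [← Real.exp_add]
        congr 1
        field_simp
        ring
      simp only [hexp]
      rw [intervalIntegral.integral_const_mul, exp_mul_intervalIntegral _ _ _ hk]
      have e1 : -(x*a₂)/c + a₁/c*(β*x) = -(x/(1+a₁)) := by
        rw [hβ_def, hc_def]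
        field_simp [(sub_pos.2 (ha1r.trans ha2l)).ne']
        ring
      have e2 : -(x*a₂)/c + a₁/c*(α*x) = -(x/(1-a₁)) := by
        rw [hα_def, hc_def]
        field_simp [(sub_pos.2 (ha1r.trans ha2l)).ne']
        ring
      rw [hF_def]
      simp only
      rw [← e1, ← e2, Real.exp_add, Real.exp_add]
      field_simp
  -- putting it together
  rw [hset, ← integral_indicator hS, Measure.volume_eq_prod, integral_prod _ hfi]
  simp only [hinner]
  rw [integral_indicator measurableSet_Ioi]
  have hb1 : (0:ℝ) < (1+a₁)⁻¹ := inv_pos.2 h1a₁'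
  have hb2 : (0:ℝ) < (1-a₁)⁻¹ := inv_pos.2 h1a₁
  have i1 : IntegrableOn (fun x => Real.exp (-(x/(1+a₁)))) (Ioi (0:ℝ)) :=
    (exp_neg_integrableOn_Ioi 0 hb1).congr_fun
      (fun x _ => by dsimp only; rw [neg_mul, inv_mul_eq_div]) measurableSet_Ioi
  have i2 : IntegrableOn (fun x => Real.exp (-(x/(1-a₁)))) (Ioi (0:ℝ)) :=
    (exp_neg_integrableOn_Ioi 0 hb2).congr_fun
      (fun x _ => by dsimp only; rw [neg_mul, inv_mul_eq_div]) measurableSet_Ioi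
  have v1 : ∫ x in Ioi (0:ℝ), Real.exp (-(x/(1+a₁))) = 1+a₁ := by
    rw [show (fun x : ℝ => Real.exp (-(x/(1+a₁)))) = fun x => Real.exp (-((1+a₁)⁻¹*x)) from
      funext fun x => by rw [inv_mul_eq_div], exp_neg_mul_Ioi' hb1, one_div, inv_inv]
  have v2 : ∫ x in Ioi (0:ℝ), Real.exp (-(x/(1-a₁))) = 1-a₁ := by
    rw [show (fun x : ℝ => Real.exp (-(x/(1-a₁)))) = fun x => Real.exp (-((1-a₁)⁻¹*x)) from
      funext fun x => by rw [inv_mul_eq_div], exp_neg_mul_Ioi' hb2, one_div, inv_inv]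
  rw [hF_def]
  simp only
  rw [MeasureTheory.integral_const_mul, integral_sub i1 i2, v1, v2, hc_def]
  field_simp
  ring
end

section
/- Let $a_1 \in (-1,0)$ and $a_2 \in (0,1)$, and let $D_2^+ = \{(A_1,A_2) \in \mathbb{R}^2 : A_1 > 0,\ A_2 > 0,\ |A_1 - A_2| \ge A_1 a_2 - A_2 a_1,\ A_1 > A_2\}$. Then $\int_{D_2^+} e^{-\frac{(A_1(a_2+1) - A_2(a_1+1))^2}{4(a_2-a_1)(A_1-A_2)}}\,dA_1\,dA_2 = \frac{16(a_2-a_1)}{3}\Big(\frac{1}{(1+a_2)^3} - \frac{1}{8}\Big)$. -/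
open Real MeasureTheory

section Aux
open Set

lemma aux_integral_s {lam : ℝ} (h : 0 < lam) :
    ∫ s in Ioi (0:ℝ), s * Real.exp (-(lam * s)) = 1 / lam ^ 2 := by
  have h1 := Real.integral_rpow_mul_exp_neg_mul_Ioi (a := 2) two_pos h
  rw [Real.Gamma_two, mul_one] at h1
  calc ∫ s in Ioi (0:ℝ), s * Real.exp (-(lam * s))
      = ∫ t in Ioi (0:ℝ), t ^ ((2:ℝ) - 1) * Real.exp (-(lam * t)) := by
        refine setIntegral_congr_fun measurableSet_Ioi (fun t ht => ?_)
        norm_num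
    _ = ((1:ℝ) / lam) ^ (2:ℝ) := h1
    _ = 1 / lam ^ 2 := by
        rw [show (2:ℝ) = ((2:ℕ):ℝ) by norm_num, Real.rpow_natCast]; ring

lemma aux_integrable_s {lam : ℝ} (h : 0 < lam) :
    IntegrableOn (fun s => s * Real.exp (-(lam * s))) (Ioi (0:ℝ)) := by
  have h1 := integrableOn_rpow_mul_exp_neg_mul_rpow (s := 1) (p := 1) (b := lam)
    (by norm_num) one_pos h
  refine h1.congr_fun (fun x hx => ?_) measurableSet_Ioi
  simp [Real.rpow_one]

lemma aux_fderiv (b c : ℝ) (p : ℝ × ℝ) :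
    HasFDerivAt (fun q : ℝ × ℝ => (q.2 * (q.1 - b + c) / c, q.2 * (q.1 - b) / c))
      (LinearMap.toContinuousLinearMap (Matrix.toLin (Module.Basis.finTwoProd ℝ) (Module.Basis.finTwoProd ℝ)
        !![p.2 / c, (p.1 - b + c) / c; p.2 / c, (p.1 - b) / c])) p := by
  rw [Matrix.toLin_finTwoProd_toContinuousLinearMap]
  have h1 : HasFDerivAt (fun q : ℝ × ℝ => q.2 * (q.1 - b + c) / c)
      ((p.2 / c) • ContinuousLinearMap.fst ℝ ℝ ℝ
        + ((p.1 - b + c) / c) • ContinuousLinearMap.snd ℝ ℝ ℝ) p := by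
    have := (hasFDerivAt_snd (𝕜 := ℝ) (E := ℝ) (F := ℝ) (p := p)).mul
      (((hasFDerivAt_fst (𝕜 := ℝ) (E := ℝ) (F := ℝ) (p := p)).sub_const b).add_const c)
    simp only [div_eq_mul_inv]
    have h2 := this.mul_const c⁻¹
    refine h2.congr_fderiv ?_
    ext q <;> simp <;> ring
  have h2 : HasFDerivAt (fun q : ℝ × ℝ => q.2 * (q.1 - b) / c)
      ((p.2 / c) • ContinuousLinearMap.fst ℝ ℝ ℝ
        + ((p.1 - b) / c) • ContinuousLinearMap.snd ℝ ℝ ℝ) p := by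
    have := (hasFDerivAt_snd (𝕜 := ℝ) (E := ℝ) (F := ℝ) (p := p)).mul
      ((hasFDerivAt_fst (𝕜 := ℝ) (E := ℝ) (F := ℝ) (p := p)).sub_const b)
    simp only [div_eq_mul_inv]
    have h2 := this.mul_const c⁻¹
    refine h2.congr_fderiv ?_
    ext q <;> simp <;> ring
  exact h1.prodMk h2

end Aux

theorem integral_Q2_plus (a₁ a₂ : ℝ)
    (h₁ : a₁ ∈ Set.Ioo (-1 : ℝ) 0) (h₂ : a₂ ∈ Set.Ioo (0 : ℝ) 1) :
    (∫ A in {A : ℝ × ℝ | 0 < A.1 ∧ 0 < A.2 ∧ A.1 * a₂ - A.2 * a₁ ≤ |A.1 - A.2| ∧ A.2 < A.1},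
        Real.exp (-((A.1 * (a₂ + 1) - A.2 * (a₁ + 1)) ^ 2 / (4 * (a₂ - a₁) * (A.1 - A.2)))))
      = (16 * (a₂ - a₁) / 3) * (1 / (1 + a₂) ^ 3 - 1 / 8) := by
  obtain ⟨ha1, ha1'⟩ := h₁
  obtain ⟨ha2, ha2'⟩ := h₂
  have hc : (0:ℝ) < a₂ - a₁ := by linarith
  set c : ℝ := a₂ - a₁ with hcdef
  set b : ℝ := 1 + a₂ with hbdef
  have hb1 : (1:ℝ) < b := by rw [hbdef]; linarith
  have hb2 : b < 2 := by rw [hbdef]; linarith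
  have hb0 : (0:ℝ) < b := by linarith
  have hc0 : c ≠ 0 := ne_of_gt hc
  set φ : ℝ × ℝ → ℝ × ℝ := fun q => (q.2 * (q.1 - b + c) / c, q.2 * (q.1 - b) / c) with hφdef
  set P : Set (ℝ × ℝ) := Set.Ioc b 2 ×ˢ Set.Ioi (0:ℝ) with hPdef
  have hPm : MeasurableSet P := measurableSet_Ioc.prod measurableSet_Ioi
  -- the domain is the image of P under φ
  have hD : {A : ℝ × ℝ | 0 < A.1 ∧ 0 < A.2 ∧ A.1 * a₂ - A.2 * a₁ ≤ |A.1 - A.2| ∧ A.2 < A.1}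
      = φ '' P := by
    ext A
    constructor
    · rintro ⟨hA1, hA2, hA3, hA4⟩
      have hs : 0 < A.1 - A.2 := by linarith
      rw [abs_of_pos hs] at hA3
      have key : c * A.2 ≤ (2 - b) * (A.1 - A.2) := by
        rw [hcdef, hbdef]; nlinarith [hA3]
      refine ⟨(b + c * A.2 / (A.1 - A.2), A.1 - A.2), ⟨Set.mem_Ioc.2 ⟨?_, ?_⟩, hs⟩, ?_⟩
      · show b < b + c * A.2 / (A.1 - A.2)
        have : 0 < c * A.2 / (A.1 - A.2) := by positivity
        linarith
      · show b + c * A.2 / (A.1 - A.2) ≤ 2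
        have hle : c * A.2 / (A.1 - A.2) ≤ 2 - b := by
          rw [div_le_iff₀ hs]; linarith [key]
        linarith
      · have h2 : A.1 - A.2 ≠ 0 := ne_of_gt hs
        simp only [hφdef]
        ext <;> field_simp <;> ring
    · rintro ⟨⟨x, s⟩, ⟨hx, hs⟩, rfl⟩
      simp only [Set.mem_Ioc] at hx
      simp only [Set.mem_Ioi] at hs
      have hA2 : 0 < s * (x - b) / c := by
        apply div_pos _ hc
        exact mul_pos hs (by linarith [hx.1])
      have hdiff : (s * (x - b + c) / c) - (s * (x - b) / c) = s := by
        field_simp; ring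
      constructor
      · simp only [hφdef]; linarith
      refine ⟨by simpa [hφdef] using hA2, ?_, by simp only [hφdef]; linarith⟩
      have habs : |(s * (x - b + c) / c) - (s * (x - b) / c)| = s := by
        rw [hdiff, abs_of_pos hs]
      simp only [hφdef]
      rw [habs]
      have key : s * (x - b + c) / c * a₂ - s * (x - b) / c * a₁ = s * (x - 1) := by
        rw [hbdef, hcdef]; field_simp [show a₂ - a₁ ≠ 0 from ne_of_gt (by linarith)]; ring
      rw [key]
      nlinarith [hx.2, hs]
  rw [hD]
  -- change of variables
  set B : ℝ × ℝ → (ℝ × ℝ →L[ℝ] ℝ × ℝ) := fun p =>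
    LinearMap.toContinuousLinearMap (Matrix.toLin (Module.Basis.finTwoProd ℝ) (Module.Basis.finTwoProd ℝ)
      !![p.2 / c, (p.1 - b + c) / c; p.2 / c, (p.1 - b) / c]) with hBdef
  have hinj : Set.InjOn φ P := by
    rintro ⟨x, s⟩ ⟨hx, hs⟩ ⟨y, t⟩ ⟨hy, ht⟩ h
    simp only [hφdef, Prod.mk.injEq] at h
    simp only [Set.mem_Ioi] at hs ht
    have h1 : s * (x - b + c) / c - s * (x - b) / c = s := by field_simp; ring
    have h2 : t * (y - b + c) / c - t * (y - b) / c = t := by field_simp; ring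
    have hst : s = t := by rw [← h1, ← h2, h.1, h.2]
    subst hst
    have h2' : s * (x - b) = s * (y - b) := by
      have h' := congrArg (fun z : ℝ => z * c) h.2
      simpa [div_mul_cancel₀, hc0] using h'
    have hxy : x - b = y - b := mul_left_cancel₀ (ne_of_gt hs) h2'
    have hxy' : x = y := by linarith
    simp [hxy']
  have hder : ∀ p ∈ P, HasFDerivWithinAt φ (B p) P p := fun p _ =>
    (aux_fderiv b c p).hasFDerivWithinAt
  rw [MeasureTheory.integral_image_eq_integral_abs_det_fderiv_smul volume hPm hder hinj]
  -- rewrite integrand on P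
  have hcong : ∫ p in P, |(B p).det| •
        Real.exp (-(((φ p).1 * (a₂ + 1) - (φ p).2 * (a₁ + 1)) ^ 2 / (4 * c * ((φ p).1 - (φ p).2))))
      = ∫ p in P, c⁻¹ * (p.2 * Real.exp (-(p.1 ^ 2 / (4 * c) * p.2))) := by
    refine setIntegral_congr_fun hPm (fun p hp => ?_)
    obtain ⟨hp1, hp2⟩ := hp
    simp only [Set.mem_Ioc] at hp1
    simp only [Set.mem_Ioi] at hp2
    have hdet : (B p).det = -(p.2 / c) := by
      simp only [hBdef, LinearMap.det_toContinuousLinearMap, LinearMap.det_toLin,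
        Matrix.det_fin_two_of]
      field_simp
      ring
    have hdiff : (φ p).1 - (φ p).2 = p.2 := by
      simp only [hφdef]; field_simp; ring
    have hnum : (φ p).1 * (a₂ + 1) - (φ p).2 * (a₁ + 1) = p.2 * p.1 := by
      simp only [hφdef]; rw [hbdef, hcdef]; field_simp [show a₂ - a₁ ≠ 0 from ne_of_gt (by linarith)]; ring
    rw [hdet, hnum, hdiff, abs_neg, abs_of_pos (div_pos hp2 hc), smul_eq_mul]
    have harg : (p.2 * p.1) ^ 2 / (4 * c * p.2) = p.1 ^ 2 / (4 * c) * p.2 := by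
      have : p.2 ≠ 0 := ne_of_gt hp2
      field_simp
    rw [harg]
    ring
  rw [hcong]
  -- integrability on P
  have hmeas : AEStronglyMeasurable
      (fun p : ℝ × ℝ => c⁻¹ * (p.2 * Real.exp (-(p.1 ^ 2 / (4 * c) * p.2))))
      (volume.restrict P) := by
    apply Continuous.aestronglyMeasurable
    fun_prop
  have hbnd : IntegrableOn
      (fun p : ℝ × ℝ => c⁻¹ * (p.2 * Real.exp (-(b ^ 2 / (4 * c) * p.2)))) P := by
    have hlam : 0 < b ^ 2 / (4 * c) := by positivity
    have hg : Integrable (fun s : ℝ => c⁻¹ * (s * Real.exp (-(b ^ 2 / (4 * c) * s))))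
        (volume.restrict (Set.Ioi (0:ℝ))) := ((aux_integrable_s hlam).const_mul c⁻¹)
    have hf : Integrable (fun _ : ℝ => (1:ℝ)) (volume.restrict (Set.Ioc b 2)) :=
      integrableOn_const measure_Ioc_lt_top.ne
    have := hf.mul_prod hg
    rw [Measure.prod_restrict] at this
    refine (IntegrableOn.congr_fun this (fun p hp => ?_) hPm)
    simp
  have hI : IntegrableOn
      (fun p : ℝ × ℝ => c⁻¹ * (p.2 * Real.exp (-(p.1 ^ 2 / (4 * c) * p.2)))) P := by
    refine hbnd.mono' hmeas ?_
    rw [ae_restrict_iff' hPm]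
    refine Filter.Eventually.of_forall (fun p hp => ?_)
    obtain ⟨hp1, hp2⟩ := hp
    simp only [Set.mem_Ioc] at hp1
    simp only [Set.mem_Ioi] at hp2
    have h1 : Real.exp (-(p.1 ^ 2 / (4 * c) * p.2)) ≤ Real.exp (-(b ^ 2 / (4 * c) * p.2)) := by
      apply Real.exp_le_exp.2
      have hsq : b ^ 2 * p.2 ≤ p.1 ^ 2 * p.2 :=
        mul_le_mul_of_nonneg_right (pow_le_pow_left₀ hb0.le hp1.1.le 2) hp2.le
      have h4c : 0 < 4 * c := by linarith
      have hdd : b ^ 2 * p.2 / (4 * c) ≤ p.1 ^ 2 * p.2 / (4 * c) :=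
        (div_le_div_iff_of_pos_right h4c).2 hsq
      rw [div_mul_eq_mul_div, div_mul_eq_mul_div]
      linarith [hdd]
    rw [Real.norm_eq_abs, abs_of_nonneg (by positivity)]
    have : 0 ≤ c⁻¹ * p.2 := by positivity
    nlinarith [h1]
  -- Fubini
  rw [hPdef] at hI ⊢
  rw [Measure.volume_eq_prod] at hI ⊢
  rw [MeasureTheory.setIntegral_prod _ hI]
  -- inner integral
  have hinner : ∀ x ∈ Set.Ioc b 2,
      (∫ s in Set.Ioi (0:ℝ), c⁻¹ * (s * Real.exp (-(x ^ 2 / (4 * c) * s)))) = 16 * c / x ^ 4 := by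
    intro x hx
    simp only [Set.mem_Ioc] at hx
    have hx0 : 0 < x := lt_trans hb0 hx.1
    have hlam : 0 < x ^ 2 / (4 * c) := by positivity
    rw [MeasureTheory.integral_const_mul, aux_integral_s hlam]
    field_simp
    ring
  rw [setIntegral_congr_fun measurableSet_Ioc hinner]
  -- final integral
  rw [← intervalIntegral.integral_of_le hb2.le]
  have hfinal : ∫ x in b..2, 16 * c / x ^ 4 = 16 * c * ((2:ℝ) ^ (-3:ℤ) - b ^ (-3:ℤ)) / (-3) := by
    have h0 : (0:ℝ) ∉ Set.uIcc b 2 := by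
      rw [Set.uIcc_of_le hb2.le]
      rintro ⟨h', _⟩
      linarith
    have := integral_zpow (a := b) (b := 2) (n := -4)
      (Or.inr ⟨by norm_num, h0⟩)
    have hcongr : Set.EqOn (fun x : ℝ => 16 * c / x ^ 4)
        (fun x : ℝ => 16 * c * x ^ (-4:ℤ)) (Set.uIcc b 2) := by
      intro x hx
      have hx0 : x ≠ 0 := fun h => h0 (h ▸ hx)
      simp only [zpow_neg, div_eq_mul_inv]
      norm_num
    rw [intervalIntegral.integral_congr hcongr,
      intervalIntegral.integral_const_mul, this]
    norm_num
    ring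
  rw [hfinal]
  have hb3 : b ^ 3 ≠ 0 := by positivity
  have h2 : (2:ℝ) ^ (-3:ℤ) = 1/8 := by norm_num
  have h3 : b ^ (-3:ℤ) = 1 / b ^ 3 := by
    rw [zpow_neg]
    norm_num
  rw [h2, h3]
  field_simp
  ring
end

section
/- Let $a_1 \in (-1,0)$ and $a_2 \in (0,1)$, and let $D_2^- = \{(A_1,A_2) \in \mathbb{R}^2 : A_1 > 0,\ A_2 > 0,\ |A_1 - A_2| \ge A_1 a_2 - A_2 a_1,\ A_2 > A_1\}$. Then $\int_{D_2^-} e^{-\frac{(A_2(1-a_1) - A_1(1-a_2))^2}{4(a_2-a_1)(A_2-A_1)}}\,dA_1\,dA_2 = \frac{16(a_2-a_1)}{3}\Big(\frac{1}{(1-a_1)^3} - \frac{1}{8}\Big)$. -/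
open Real MeasureTheory Set intervalIntegral

set_option maxHeartbeats 2000000 in
theorem integral_Q2_minus (a₁ a₂ : ℝ)
    (h₁ : a₁ ∈ Set.Ioo (-1 : ℝ) 0) (h₂ : a₂ ∈ Set.Ioo (0 : ℝ) 1) :
    (∫ A in {A : ℝ × ℝ | 0 < A.1 ∧ 0 < A.2 ∧ A.1 * a₂ - A.2 * a₁ ≤ |A.1 - A.2| ∧ A.1 < A.2},
        Real.exp (-((A.2 * (1 - a₁) - A.1 * (1 - a₂)) ^ 2 / (4 * (a₂ - a₁) * (A.2 - A.1)))))
      = (16 * (a₂ - a₁) / 3) * (1 / (1 - a₁) ^ 3 - 1 / 8) := by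
  obtain ⟨ha₁, ha₁'⟩ := h₁
  obtain ⟨ha₂, ha₂'⟩ := h₂
  have hc : (0:ℝ) < a₂ - a₁ := by linarith
  have hb : (0:ℝ) < 1 - a₁ := by linarith
  have hb2 : (1:ℝ) - a₁ < 2 := by linarith
  have hd : (0:ℝ) < 1 - a₂ := by linarith
  have hcne : a₂ - a₁ ≠ 0 := ne_of_gt hc
  have hbne : (1:ℝ) - a₁ ≠ 0 := ne_of_gt hb
  obtain ⟨g, hg⟩ : ∃ g : ℝ × ℝ → ℝ, g = fun A =>
      Real.exp (-((A.2 * (1 - a₁) - A.1 * (1 - a₂)) ^ 2 / (4 * (a₂ - a₁) * (A.2 - A.1)))) :=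
    ⟨_, rfl⟩
  obtain ⟨Φ, hΦ⟩ : ∃ Φ : ℝ × ℝ → ℝ × ℝ, Φ = fun p =>
      ((a₂-a₁)⁻¹ * (p.2 - (1-a₁)*(p.1*p.2)), (a₂-a₁)⁻¹ * (p.2 - (1-a₂)*(p.1*p.2))) := ⟨_, rfl⟩
  obtain ⟨B, hB⟩ : ∃ B : ℝ × ℝ → ℝ × ℝ →L[ℝ] ℝ × ℝ, B = fun p =>
      LinearMap.toContinuousLinearMap (Matrix.toLin (Module.Basis.finTwoProd ℝ) (Module.Basis.finTwoProd ℝ)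
        !![-((1-a₁)*p.2)/(a₂-a₁), (1-(1-a₁)*p.1)/(a₂-a₁);
           -((1-a₂)*p.2)/(a₂-a₁), (1-(1-a₂)*p.1)/(a₂-a₁)]) := ⟨_, rfl⟩
  obtain ⟨S, hS⟩ : ∃ S : Set (ℝ × ℝ), S = Ioo (1/2 : ℝ) (1/(1-a₁)) ×ˢ Ioi (0:ℝ) := ⟨_, rfl⟩
  obtain ⟨D', hD'⟩ : ∃ D' : Set (ℝ × ℝ),
      D' = {A : ℝ × ℝ | 0 < A.1 ∧ 0 < A.2 ∧ A.1 * (1+a₂) < A.2 * (1+a₁)} := ⟨_, rfl⟩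
  have hSm : MeasurableSet S := by rw [hS]; exact measurableSet_Ioo.prod measurableSet_Ioi
  -- derivative
  have hfd : ∀ p : ℝ × ℝ, HasFDerivAt Φ (B p) p := by
    intro p
    rw [hB, hΦ]
    dsimp only
    rw [Matrix.toLin_finTwoProd_toContinuousLinearMap]
    refine HasFDerivAt.congr_fderiv (HasFDerivAt.prodMk
      ((hasFDerivAt_snd.sub ((hasFDerivAt_fst.mul hasFDerivAt_snd).const_mul (1-a₁))).const_mul (a₂-a₁)⁻¹)
      ((hasFDerivAt_snd.sub ((hasFDerivAt_fst.mul hasFDerivAt_snd).const_mul (1-a₂))).const_mul (a₂-a₁)⁻¹)) ?_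
    ext x <;> simp <;> field_simp <;> ring
  -- determinant
  have hBdet : ∀ p : ℝ × ℝ, (B p).det = -(p.2/(a₂-a₁)) := by
    intro p
    rw [hB]
    simp only [LinearMap.det_toContinuousLinearMap, LinearMap.det_toLin, Matrix.det_fin_two_of]
    field_simp
    ring
  -- injectivity
  have hinj : InjOn Φ S := by
    intro p hp q hq h
    rw [hS] at hp hq
    have hp2 : (0:ℝ) < p.2 := hp.2
    have e1 := congrArg Prod.fst h
    have e2 := congrArg Prod.snd h
    rw [hΦ] at e1 e2
    simp only at e1 e2
    have e1' : p.2 - (1-a₁)*(p.1*p.2) = q.2 - (1-a₁)*(q.1*q.2) :=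
      mul_left_cancel₀ (inv_ne_zero hcne) e1
    have e2' : p.2 - (1-a₂)*(p.1*p.2) = q.2 - (1-a₂)*(q.1*q.2) :=
      mul_left_cancel₀ (inv_ne_zero hcne) e2
    have h2 : p.2 = q.2 := by
      have : p.2 * (a₂-a₁) = q.2 * (a₂-a₁) := by linear_combination (1-a₁)*e2' - (1-a₂)*e1'
      exact mul_right_cancel₀ hcne this
    have h12 : p.1 * p.2 = q.1 * q.2 := by
      have : (p.1*p.2) * (a₂-a₁) = (q.1*q.2) * (a₂-a₁) := by linear_combination e2' - e1'
      exact mul_right_cancel₀ hcne this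
    have h1 : p.1 = q.1 := by
      have : p.1 * p.2 = q.1 * p.2 := by rw [h12, h2]
      exact mul_right_cancel₀ (ne_of_gt hp2) this
    exact Prod.ext h1 h2
  -- image
  have himg : Φ '' S = D' := by
    rw [hD']
    ext A
    constructor
    · rintro ⟨⟨v, u⟩, hvu, rfl⟩
      rw [hS] at hvu
      obtain ⟨⟨hv1, hv2⟩, hu⟩ := hvu
      have hv1' : (1:ℝ)/2 < v := hv1
      have hv2' : v < 1/(1-a₁) := hv2
      have hu' : (0:ℝ) < u := hu
      have hv0 : (0:ℝ) < v := lt_trans (by norm_num) hv1'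
      have hbv : (1-a₁)*v < 1 := by rw [lt_div_iff₀ hb] at hv2'; linarith
      have hdv : (1-a₂)*v < 1 := by nlinarith
      rw [hΦ]
      simp only [Set.mem_setOf_eq]
      refine ⟨?_, ?_, ?_⟩
      · exact mul_pos (inv_pos.mpr hc) (by nlinarith)
      · exact mul_pos (inv_pos.mpr hc) (by nlinarith)
      · have key : (a₂-a₁)⁻¹ * (u - (1-a₂)*(v*u)) * (1+a₁)
            - (a₂-a₁)⁻¹ * (u - (1-a₁)*(v*u)) * (1+a₂) = u*(2*v-1) := by
          field_simp
          ring
        nlinarith [mul_pos hu' (by linarith : (0:ℝ) < 2*v-1)]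
    · rintro ⟨hA1, hA2, hA3⟩
      have hA12 : A.1 < A.2 := by nlinarith
      have hu : 0 < (1-a₁)*A.2 - (1-a₂)*A.1 := by nlinarith
      have hmem : ((A.2-A.1)/((1-a₁)*A.2 - (1-a₂)*A.1), (1-a₁)*A.2 - (1-a₂)*A.1) ∈ S := by
        rw [hS]
        refine Set.mem_prod.mpr ⟨Set.mem_Ioo.mpr ⟨?_, ?_⟩, Set.mem_Ioi.mpr hu⟩
        · rw [lt_div_iff₀ hu]; nlinarith
        · rw [div_lt_div_iff₀ hu hb]; nlinarith
      refine ⟨_, hmem, ?_⟩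
      have hvu : (A.2-A.1)/((1-a₁)*A.2 - (1-a₂)*A.1) * ((1-a₁)*A.2 - (1-a₂)*A.1)
          = A.2 - A.1 := div_mul_cancel₀ _ (ne_of_gt hu)
      rw [hΦ]
      refine Prod.ext ?_ ?_ <;> dsimp only <;> rw [hvu] <;> field_simp <;> ring
  -- measure zero line
  have hL0 : volume {A : ℝ × ℝ | A.2*(1+a₁) = A.1*(1+a₂)} = 0 := by
    have hLm : MeasurableSet {A : ℝ × ℝ | A.2*(1+a₁) = A.1*(1+a₂)} :=
      measurableSet_eq_fun (by fun_prop) (by fun_prop)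
    rw [show (volume : Measure (ℝ × ℝ)) = (volume : Measure ℝ).prod volume from rfl,
      Measure.measure_prod_null hLm]
    filter_upwards with x
    refine measure_mono_null ?_ (measure_singleton (x*(1+a₂)/(1+a₁)))
    intro y hy
    simp only [Set.mem_preimage, Set.mem_setOf_eq] at hy
    simp only [Set.mem_singleton_iff]
    rw [eq_div_iff (by linarith : (1:ℝ)+a₁ ≠ 0)]
    linarith
  -- a.e. equality of domains
  have hsub1 : D' ⊆ {A : ℝ × ℝ | 0 < A.1 ∧ 0 < A.2 ∧ A.1 * a₂ - A.2 * a₁ ≤ |A.1 - A.2| ∧ A.1 < A.2} := by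
    rw [hD']
    rintro A ⟨hA1, hA2, hA3⟩
    have hA12 : A.1 < A.2 := by nlinarith
    refine ⟨hA1, hA2, ?_, hA12⟩
    rw [abs_sub_comm, abs_of_pos (by linarith : (0:ℝ) < A.2 - A.1)]
    nlinarith
  have hsub2 : {A : ℝ × ℝ | 0 < A.1 ∧ 0 < A.2 ∧ A.1 * a₂ - A.2 * a₁ ≤ |A.1 - A.2| ∧ A.1 < A.2} \ D'
      ⊆ {A : ℝ × ℝ | A.2*(1+a₁) = A.1*(1+a₂)} := by
    rw [hD']
    rintro A ⟨⟨hA1, hA2, hA3, hA4⟩, hnA⟩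
    simp only [Set.mem_setOf_eq, not_and, not_lt] at hnA
    have h5 := hnA hA1 hA2
    rw [abs_sub_comm, abs_of_pos (by linarith : (0:ℝ) < A.2 - A.1)] at hA3
    show A.2*(1+a₁) = A.1*(1+a₂)
    have h6 : A.1*(1+a₂) ≤ A.2*(1+a₁) := by nlinarith
    exact le_antisymm h5 h6
  have hD : {A : ℝ × ℝ | 0 < A.1 ∧ 0 < A.2 ∧ A.1 * a₂ - A.2 * a₁ ≤ |A.1 - A.2| ∧ A.1 < A.2}
      =ᵐ[volume] D' := by
    rw [MeasureTheory.ae_eq_set]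
    constructor
    · exact measure_mono_null hsub2 hL0
    · rw [Set.diff_eq_empty.mpr hsub1]; exact measure_empty
  -- integrability for Fubini
  have hint : IntegrableOn (fun p : ℝ × ℝ => p.2/(a₂-a₁) * Real.exp (-(p.2/(4*(a₂-a₁)*p.1))))
      (Ioo (1/2 : ℝ) (1/(1-a₁)) ×ˢ Ioi (0:ℝ)) ((volume : Measure ℝ).prod volume) := by
    have hk : (0:ℝ) < (1-a₁)/(4*(a₂-a₁)) := by positivity
    have hG : IntegrableOn (fun u : ℝ => u/(a₂-a₁) * Real.exp (-(u * ((1-a₁)/(4*(a₂-a₁))))))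
        (Ioi (0:ℝ)) volume := by
      have h0 := integrableOn_rpow_mul_exp_neg_mul_rpow (p := 1) (s := 1) (by norm_num) zero_lt_one hk
      have h1 : IntegrableOn (fun x : ℝ =>
          (a₂-a₁)⁻¹ * (x ^ (1:ℝ) * Real.exp (-((1-a₁)/(4*(a₂-a₁))) * x ^ (1:ℝ))))
          (Ioi (0:ℝ)) volume := h0.const_mul (a₂-a₁)⁻¹
      refine IntegrableOn.congr_fun h1 (fun x hx => ?_) measurableSet_Ioi
      rw [rpow_one, show -((1-a₁)/(4*(a₂-a₁)))*x = -(x*((1-a₁)/(4*(a₂-a₁)))) by ring]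
      rw [div_eq_inv_mul]
      ring
    have hF : IntegrableOn (fun _ : ℝ => (1:ℝ)) (Ioo (1/2 : ℝ) (1/(1-a₁))) volume :=
      (integrableOn_const_iff).mpr (Or.inr measure_Ioo_lt_top)
    have h2 := hF.mul_prod hG
    rw [Measure.prod_restrict] at h2
    have hm : Measurable (fun p : ℝ × ℝ => p.2/(a₂-a₁) * Real.exp (-(p.2/(4*(a₂-a₁)*p.1)))) := by
      fun_prop
    refine Integrable.mono' h2 hm.aestronglyMeasurable ?_
    rw [ae_restrict_iff' (measurableSet_Ioo.prod measurableSet_Ioi)]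
    filter_upwards with p hp
    have hp1 : (1:ℝ)/2 < p.1 := hp.1.1
    have hp1' : p.1 < 1/(1-a₁) := hp.1.2
    have hp2 : (0:ℝ) < p.2 := hp.2
    have hp10 : (0:ℝ) < p.1 := lt_trans (by norm_num) hp1
    have hbp : (1-a₁)*p.1 < 1 := by rw [lt_div_iff₀ hb] at hp1'; linarith
    rw [Real.norm_eq_abs, abs_of_nonneg (mul_nonneg (div_nonneg hp2.le hc.le) (exp_pos _).le),
      one_mul]
    refine mul_le_mul_of_nonneg_left (exp_le_exp.mpr ?_) (div_nonneg hp2.le hc.le)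
    rw [neg_le_neg_iff]
    rw [show p.2*((1-a₁)/(4*(a₂-a₁))) = p.2*(1-a₁)/(4*(a₂-a₁)) by ring]
    rw [div_le_div_iff₀ (by positivity) (mul_pos (by linarith) hp10)]
    nlinarith [mul_le_mul_of_nonneg_left hbp.le (by positivity : (0:ℝ) ≤ 4*(a₂-a₁)*p.2)]
  calc (∫ A in {A : ℝ × ℝ | 0 < A.1 ∧ 0 < A.2 ∧ A.1 * a₂ - A.2 * a₁ ≤ |A.1 - A.2| ∧ A.1 < A.2},
        Real.exp (-((A.2 * (1 - a₁) - A.1 * (1 - a₂)) ^ 2 / (4 * (a₂ - a₁) * (A.2 - A.1)))))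
      = ∫ A in D', g A := by rw [hg]; exact setIntegral_congr_set hD
    _ = ∫ A in Φ '' S, g A := by rw [himg]
    _ = ∫ p in S, |(B p).det| • g (Φ p) :=
        integral_image_eq_integral_abs_det_fderiv_smul volume hSm
          (fun p _ => (hfd p).hasFDerivWithinAt) hinj g
    _ = ∫ p in S, p.2/(a₂-a₁) * Real.exp (-(p.2/(4*(a₂-a₁)*p.1))) := by
        refine setIntegral_congr_fun hSm fun p hp => ?_
        rw [hS] at hp
        have hp1 : (1:ℝ)/2 < p.1 := hp.1.1
        have hp2 : (0:ℝ) < p.2 := hp.2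
        have hp10 : (0:ℝ) < p.1 := lt_trans (by norm_num) hp1
        rw [hBdet p, abs_neg, abs_of_pos (div_pos hp2 hc), smul_eq_mul]
        have hX : (Φ p).2 * (1-a₁) - (Φ p).1 * (1-a₂) = p.2 := by
          rw [hΦ]; dsimp only; field_simp; ring
        have hY : (Φ p).2 - (Φ p).1 = p.1 * p.2 := by
          rw [hΦ]; dsimp only; field_simp; ring
        rw [hg]
        dsimp only
        rw [hX, hY]
        have hden1 : (0:ℝ) < 4*(a₂-a₁)*(p.1*p.2) := mul_pos (by linarith) (mul_pos hp10 hp2)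
        have hden2 : (0:ℝ) < 4*(a₂-a₁)*p.1 := mul_pos (by linarith) hp10
        congr 1
        congr 1
        rw [neg_inj, div_eq_div_iff hden1.ne' hden2.ne']
        ring
    _ = ∫ v in Ioo (1/2 : ℝ) (1/(1-a₁)), ∫ u in Ioi (0:ℝ),
          u/(a₂-a₁) * Real.exp (-(u/(4*(a₂-a₁)*v))) := by
        rw [hS]
        rw [show (volume : Measure (ℝ × ℝ)) = (volume : Measure ℝ).prod volume from rfl]
        exact setIntegral_prod _ hint
    _ = ∫ v in Ioo (1/2 : ℝ) (1/(1-a₁)), 16*(a₂-a₁)*v^2 := by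
        refine setIntegral_congr_fun measurableSet_Ioo fun v hv => ?_
        have hv0 : (0:ℝ) < v := lt_trans (by norm_num) hv.1
        have hr : (0:ℝ) < (4*(a₂-a₁)*v)⁻¹ := by positivity
        have step1 : (∫ u in Ioi (0:ℝ), u/(a₂-a₁) * Real.exp (-(u/(4*(a₂-a₁)*v))))
            = ∫ u in Ioi (0:ℝ), (a₂-a₁)⁻¹ * (u ^ ((2:ℝ)-1) * Real.exp (-((4*(a₂-a₁)*v)⁻¹ * u))) := by
          refine setIntegral_congr_fun measurableSet_Ioi fun u hu => ?_
          have harg : u/(4*(a₂-a₁)*v) = (4*(a₂-a₁)*v)⁻¹ * u := by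
            rw [div_eq_mul_inv]; ring
          rw [harg, show ((2:ℝ)-1) = 1 by norm_num, rpow_one]
          ring
        rw [step1, MeasureTheory.integral_const_mul,
          integral_rpow_mul_exp_neg_mul_Ioi (by norm_num : (0:ℝ) < 2) hr,
          one_div, inv_inv, Real.Gamma_two,
          show ((2:ℝ)) = ((2:ℕ):ℝ) by norm_num, rpow_natCast]
        field_simp
        ring
    _ = (16 * (a₂ - a₁) / 3) * (1 / (1 - a₁) ^ 3 - 1 / 8) := by
        have hle : (1:ℝ)/2 ≤ 1/(1-a₁) := by
          rw [div_le_div_iff₀ (by norm_num) hb]; linarith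
        rw [← integral_Ioc_eq_integral_Ioo, ← integral_of_le hle]
        rw [intervalIntegral.integral_const_mul, integral_pow]
        simp only [div_pow, one_pow]
        field_simp
        ring
end

section
/- Define $p(a_1,a_2) = (a_2 - a_1)\big(\frac{4}{3(1+a_2)^3} + \frac{4}{3(1-a_1)^3} + \frac{1}{6}\big)$. Then for every $\mu \in [0,1]$, $\int_{-1}^{-\mu}\int_{\mu}^{1} p(a_1,a_2)\,da_2\,da_1 = \frac{(1-\mu)^2}{6}\Big(6 + \mu - \Big(\frac{2\mu}{1+\mu}\Big)^2\Big)$. -/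
open Real MeasureTheory

lemma inner_eval (μ a₁ : ℝ) (hμ0 : 0 ≤ μ) (hμ1 : μ ≤ 1) (ha : a₁ ≤ 0) :
    (∫ a₂ in μ..1, (a₂ - a₁) * (4 / (3 * (1 + a₂) ^ 3) + 4 / (3 * (1 - a₁) ^ 3) + 1 / 6))
      = (4/3) * (-(1/2) + (1+a₁)/8 + 1/(1+μ) - (1+a₁)/(2*(1+μ)^2))
        + (4 / (3 * (1 - a₁) ^ 3) + 1/6) * ((1-μ^2)/2 - a₁*(1-μ)) := by
  have ha1 : (0:ℝ) < 1 - a₁ := by linarith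
  have ha1' : (1:ℝ) - a₁ ≠ 0 := ne_of_gt ha1
  have hμne : (1:ℝ) + μ ≠ 0 := by positivity
  have key : ∀ x ∈ Set.uIcc μ 1, HasDerivAt
      (fun y : ℝ => (4/3) * (-(1+y)⁻¹ + ((1+a₁)/2) * ((1+y)^2)⁻¹)
        + (4 / (3 * (1 - a₁) ^ 3) + 1/6) * (y^2/2 - a₁*y))
      ((x - a₁) * (4 / (3 * (1 + x) ^ 3) + 4 / (3 * (1 - a₁) ^ 3) + 1 / 6)) x := by
    intro x hx
    rw [Set.uIcc_of_le hμ1] at hx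
    have hx0 : (0:ℝ) < 1 + x := by linarith [hx.1]
    have h1 : HasDerivAt (fun y : ℝ => 1 + y) 1 x := by
      simpa using (hasDerivAt_id x).const_add (1:ℝ)
    have h2 := h1.inv (ne_of_gt hx0)
    have h3 := (h1.pow 2).inv (pow_ne_zero 2 (ne_of_gt hx0))
    have h5 : HasDerivAt (fun y : ℝ => y^2/2 - a₁*y) (x - a₁) x := by
      exact (((hasDerivAt_pow 2 x).div_const 2).sub ((hasDerivAt_id x).const_mul a₁)).congr_deriv (by norm_num)
    have htot := ((h2.neg.add (h3.const_mul ((1+a₁)/2))).const_mul (4/3:ℝ)).add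
      (h5.const_mul (4 / (3 * (1 - a₁) ^ 3) + 1/6))
    refine htot.congr_deriv ?_
    simp only [Pi.pow_apply]
    field_simp
    ring
  have hcont : ContinuousOn
      (fun a₂ : ℝ => (a₂ - a₁) * (4 / (3 * (1 + a₂) ^ 3) + 4 / (3 * (1 - a₁) ^ 3) + 1 / 6))
      (Set.uIcc μ 1) := by
    apply ContinuousOn.mul (by fun_prop)
    apply ContinuousOn.add
    apply ContinuousOn.add
    · apply ContinuousOn.div continuousOn_const (by fun_prop)
      intro x hx
      rw [Set.uIcc_of_le hμ1] at hx
      have : (0:ℝ) < 1 + x := by linarith [hx.1]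
      positivity
    · exact continuousOn_const
    · exact continuousOn_const
  rw [intervalIntegral.integral_eq_sub_of_hasDerivAt key hcont.intervalIntegrable]
  have h2ne : (1:ℝ) + 1 ≠ 0 := by norm_num
  field_simp
  ring

theorem beam_equilibrium_probability (μ : ℝ) (h : μ ∈ Set.Icc (0 : ℝ) 1) :
    (∫ a₁ in (-1 : ℝ)..(-μ), ∫ a₂ in μ..1,
        (a₂ - a₁) * (4 / (3 * (1 + a₂) ^ 3) + 4 / (3 * (1 - a₁) ^ 3) + 1 / 6))
      = ((1 - μ) ^ 2 / 6) * (6 + μ - (2 * μ / (1 + μ)) ^ 2) := by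
  obtain ⟨hμ0, hμ1⟩ := h
  have hμne : (1:ℝ) + μ ≠ 0 := by positivity
  have hle : (-1:ℝ) ≤ -μ := by linarith
  have hcongr : Set.EqOn
      (fun a₁ : ℝ => ∫ a₂ in μ..1,
        (a₂ - a₁) * (4 / (3 * (1 + a₂) ^ 3) + 4 / (3 * (1 - a₁) ^ 3) + 1 / 6))
      (fun a₁ : ℝ => (4/3) * (-(1/2) + (1+a₁)/8 + 1/(1+μ) - (1+a₁)/(2*(1+μ)^2))
        + (4 / (3 * (1 - a₁) ^ 3) + 1/6) * ((1-μ^2)/2 - a₁*(1-μ)))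
      (Set.uIcc (-1) (-μ)) := by
    intro a₁ ha₁
    rw [Set.uIcc_of_le hle] at ha₁
    exact inner_eval μ a₁ hμ0 hμ1 (by linarith [ha₁.2])
  rw [intervalIntegral.integral_congr hcongr]
  have key : ∀ x ∈ Set.uIcc (-1:ℝ) (-μ), HasDerivAt
      (fun y : ℝ => ((4/3) * (-(1/2) + 1/(1+μ) + 1/8 - 1/(2*(1+μ)^2)) + (1-μ^2)/12) * y
        + ((4/3) * (1/16 - 1/(4*(1+μ)^2)) - (1-μ)/12) * y^2
        + (4/3) * ((((1-μ^2)/2 - (1-μ))/2) * ((1-y)^2)⁻¹ + (1-μ) * (1-y)⁻¹))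
      ((4/3) * (-(1/2) + (1+x)/8 + 1/(1+μ) - (1+x)/(2*(1+μ)^2))
        + (4 / (3 * (1 - x) ^ 3) + 1/6) * ((1-μ^2)/2 - x*(1-μ))) x := by
    intro x hx
    rw [Set.uIcc_of_le hle] at hx
    have hx1 : (0:ℝ) < 1 - x := by linarith [hx.2]
    have h1m : HasDerivAt (fun y : ℝ => 1 - y) (-1) x := by
      simpa using (hasDerivAt_id x).const_sub (1:ℝ)
    have hid : HasDerivAt (fun y : ℝ => y) 1 x := hasDerivAt_id x
    have hsq : HasDerivAt (fun y : ℝ => y^2) (2*x) x := by simpa using hasDerivAt_pow 2 x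
    have hr := (((h1m.pow 2).inv (pow_ne_zero 2 (ne_of_gt hx1))).const_mul
        (((1-μ^2)/2 - (1-μ))/2)).add ((h1m.inv (ne_of_gt hx1)).const_mul (1-μ))
    have htot := ((hid.const_mul ((4/3) * (-(1/2) + 1/(1+μ) + 1/8 - 1/(2*(1+μ)^2)) + (1-μ^2)/12)).add
      (hsq.const_mul ((4/3) * (1/16 - 1/(4*(1+μ)^2)) - (1-μ)/12))).add (hr.const_mul (4/3:ℝ))
    refine htot.congr_deriv ?_
    simp only [Pi.pow_apply]
    field_simp
    ring
  have hcont : ContinuousOn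
      (fun a₁ : ℝ => (4/3) * (-(1/2) + (1+a₁)/8 + 1/(1+μ) - (1+a₁)/(2*(1+μ)^2))
        + (4 / (3 * (1 - a₁) ^ 3) + 1/6) * ((1-μ^2)/2 - a₁*(1-μ)))
      (Set.uIcc (-1:ℝ) (-μ)) := by
    apply ContinuousOn.add (by fun_prop)
    apply ContinuousOn.mul _ (by fun_prop)
    apply ContinuousOn.add _ continuousOn_const
    apply ContinuousOn.div continuousOn_const (by fun_prop)
    intro x hx
    rw [Set.uIcc_of_le hle] at hx
    have : (0:ℝ) < 1 - x := by linarith [hx.2]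
    positivity
  rw [intervalIntegral.integral_eq_sub_of_hasDerivAt key hcont.intervalIntegrable]
  have e1 : (1:ℝ) - -μ = 1 + μ := by ring
  have e2 : (1:ℝ) - -1 = 2 := by norm_num
  simp only [e1, e2]
  field_simp
  ring
end

section
/- Let $\sigma_0, \sigma_x, \sigma_y \in \mathbb{R}$ and set $B^+ = \{\alpha \in [0,2\pi) : \sigma_x \cos\alpha + \sigma_y \sin\alpha + \sigma_0 \ge 0\}$. Then $\lim_{N \to \infty} \sum_{\substack{1 \le j \le N \\ 2\pi j / N \bmod 2\pi \in B^+}} \log\Big(1 - \frac{\sigma_0 + \sigma_x \cos(2\pi j/N) + \sigma_y \sin(2\pi j/N)}{N}\Big) = -\frac{1}{2\pi}\int_{B^+} \big(\sigma_0 + \sigma_x \cos\varphi + \sigma_y \sin\varphi\big)\,d\varphi$ (for all sufficiently large $N$ every argument of the logarithm is positive, so the sum is eventually well defined). -/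
open Real Filter MeasureTheory Finset


private lemma sum_Icc_one_eq_range (F : ℕ → ℝ) (N : ℕ) :
    ∑ j ∈ Finset.Icc 1 N, F j = ∑ i ∈ Finset.range N, F (i + 1) := by
  induction N with
  | zero => simp
  | succ n ih =>
      rw [Finset.sum_Icc_succ_top (by omega), ih, Finset.sum_range_succ]

private lemma riemann_sum_bound (g : ℝ → ℝ) (L : ℝ) (hL : 0 ≤ L)
    (hg : ∀ x y, |g x - g y| ≤ L * |x - y|) (N : ℕ) (hN : 1 ≤ N) :
    |(∑ j ∈ Finset.Icc 1 N, g (2 * π * j / N) * (2 * π / N)) - ∫ x in (0:ℝ)..(2*π), g x|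
      ≤ L * (2 * π) ^ 2 / N := by
  have hNR : (0:ℝ) < N := by exact_mod_cast hN
  have hNne : (N:ℝ) ≠ 0 := ne_of_gt hNR
  have hgc : Continuous g := by
    have : LipschitzWith ⟨L, hL⟩ g := by
      apply LipschitzWith.of_dist_le_mul
      intro x y
      rw [Real.dist_eq, Real.dist_eq]; exact hg x y
    exact this.continuous
  set a : ℕ → ℝ := fun i => 2 * π * i / N with ha
  have hstep : ∀ i : ℕ, a (i+1) - a i = 2 * π / N := by
    intro i
    simp only [ha]
    push_cast
    field_simp
    ring
  have hmono : ∀ i : ℕ, a i ≤ a (i+1) := by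
    intro i
    have h := hstep i
    have : (0:ℝ) < 2 * π / N := by positivity
    linarith
  have hint : ∫ x in (0:ℝ)..(2*π), g x = ∑ i ∈ Finset.range N, ∫ x in a i..a (i+1), g x := by
    rw [intervalIntegral.sum_integral_adjacent_intervals
      (fun i _ => hgc.intervalIntegrable _ _)]
    congr 1
    · simp [ha]
    · simp only [ha]; field_simp
  rw [hint, sum_Icc_one_eq_range (fun j => g (2 * π * j / N) * (2 * π / N)) N]
  have hxa : ∀ i : ℕ, (2 * π * (↑(i+1):ℝ) / N) = a (i+1) := by intro i; simp [ha]
  rw [← Finset.sum_sub_distrib]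
  refine le_trans (Finset.abs_sum_le_sum_abs _ _) ?_
  have hterm : ∀ i ∈ Finset.range N,
      |g (2 * π * (↑(i+1):ℝ) / N) * (2 * π / N) - ∫ x in a i..a (i+1), g x|
        ≤ L * (2*π/N) * (2*π/N) := by
    intro i _
    rw [hxa i]
    have h1 : g (a (i+1)) * (2 * π / N) = ∫ x in a i..a (i+1), g (a (i+1)) := by
      rw [intervalIntegral.integral_const, hstep i, smul_eq_mul, mul_comm]
    rw [h1, ← intervalIntegral.integral_sub (intervalIntegrable_const)
      (hgc.intervalIntegrable _ _)]
    have := intervalIntegral.norm_integral_le_of_norm_le_const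
      (a := a i) (b := a (i+1)) (C := L * (2*π/N))
      (f := fun x => g (a (i+1)) - g x) ?_
    · rw [Real.norm_eq_abs] at this
      refine le_trans this ?_
      rw [hstep i, abs_of_nonneg (by positivity)]
    · intro x hx
      rw [Set.uIoc_of_le (hmono i)] at hx
      rw [Real.norm_eq_abs]
      refine le_trans (hg _ _) ?_
      have h2 : |a (i+1) - x| ≤ 2*π/N := by
        rw [abs_of_nonneg (by linarith [hx.2])]
        have := hstep i
        linarith [hx.1]
      exact mul_le_mul_of_nonneg_left h2 hL
  refine le_trans (Finset.sum_le_sum hterm) ?_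
  rw [Finset.sum_const, Finset.card_range, nsmul_eq_mul]
  have : (N:ℝ) * (L * (2 * π / N) * (2 * π / N)) = L * (2 * π) ^ 2 / N := by
    field_simp
  linarith [le_of_eq this]

private lemma integral_Bset (σ₀ σx σy : ℝ) :
    (∫ φ in {α : ℝ | α ∈ Set.Ico 0 (2 * π) ∧ 0 ≤ σx * Real.cos α + σy * Real.sin α + σ₀},
      (σ₀ + σx * Real.cos φ + σy * Real.sin φ))
    = ∫ x in (0:ℝ)..(2*π), max (σ₀ + σx * Real.cos x + σy * Real.sin x) 0 := by
  set f : ℝ → ℝ := fun x => σ₀ + σx * Real.cos x + σy * Real.sin x with hf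
  set B : Set ℝ := {α : ℝ | α ∈ Set.Ico 0 (2 * π) ∧ 0 ≤ σx * Real.cos α + σy * Real.sin α + σ₀}
    with hB
  have hfc : Continuous f := by fun_prop
  have hBeq : B = Set.Ico 0 (2*π) ∩ f ⁻¹' (Set.Ici 0) := by
    ext x
    simp only [hB, Set.mem_setOf_eq, Set.mem_inter_iff, Set.mem_preimage, Set.mem_Ici, hf]
    constructor <;> rintro ⟨h1, h2⟩ <;> exact ⟨h1, by linarith⟩
  have hBm : MeasurableSet B := by
    rw [hBeq]
    exact measurableSet_Ico.inter (hfc.measurable measurableSet_Ici)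
  have hBsub : B ⊆ Set.Ico 0 (2*π) := fun x hx => hx.1
  have h1 : (∫ φ in B, f φ) = ∫ φ in Set.Ico 0 (2*π), B.indicator f φ := by
    rw [setIntegral_indicator hBm, Set.inter_eq_right.mpr hBsub]
  have h2 : (∫ φ in Set.Ico 0 (2*π), B.indicator f φ)
      = ∫ φ in Set.Ico 0 (2*π), max (f φ) 0 := by
    refine setIntegral_congr_fun measurableSet_Ico (fun x hx => ?_)
    by_cases hx0 : 0 ≤ f x
    · have hxB : x ∈ B := by
        rw [hBeq]; exact ⟨hx, hx0⟩
      rw [Set.indicator_of_mem hxB, max_eq_left hx0]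
    · have hxB : x ∉ B := by
        rw [hBeq]; rintro ⟨-, h⟩; exact hx0 h
      rw [Set.indicator_of_notMem hxB, max_eq_right (le_of_not_ge hx0)]
  have h3 : (∫ φ in Set.Ico 0 (2*π), max (f φ) 0)
      = ∫ φ in Set.Ioc 0 (2*π), max (f φ) 0 :=
    setIntegral_congr_set Ico_ae_eq_Ioc
  rw [h1, h2, h3, ← intervalIntegral.integral_of_le (by positivity : (0:ℝ) ≤ 2*π)]

private lemma cond_iff (σ₀ σx σy : ℝ) (N j : ℕ) (h1 : 1 ≤ j) (hjN : j ≤ N) :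
    ((2 * π * (j : ℝ) / N - 2 * π * ⌊(2 * π * (j : ℝ) / N) / (2 * π)⌋ : ℝ) ∈
      {α : ℝ | α ∈ Set.Ico 0 (2 * π) ∧ 0 ≤ σx * Real.cos α + σy * Real.sin α + σ₀})
    ↔ 0 ≤ σ₀ + σx * Real.cos (2 * π * (j : ℝ) / N) + σy * Real.sin (2 * π * (j : ℝ) / N) := by
  have hN : 1 ≤ N := le_trans h1 hjN
  have hNR : (0:ℝ) < N := by exact_mod_cast hN
  have hNne : (N:ℝ) ≠ 0 := ne_of_gt hNR
  have hπ : (0:ℝ) < π := pi_pos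
  rcases eq_or_lt_of_le hjN with hEq | hLt
  · subst hEq
    have hx : 2 * π * (j : ℝ) / j = 2 * π := by field_simp
    rw [hx]
    have h2 : (2 * π) / (2 * π) = (1:ℝ) := div_self (by positivity)
    rw [h2]
    have h3 : (2*π - 2*π*((⌊(1:ℝ)⌋ : ℤ):ℝ) : ℝ) = 0 := by
      rw [Int.floor_one]; push_cast; ring
    rw [h3]
    simp only [Set.mem_setOf_eq, Set.mem_Ico, Real.cos_zero, Real.sin_zero,
      Real.cos_two_pi, Real.sin_two_pi, le_refl, true_and]
    constructor
    · rintro ⟨-, h⟩; linarith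
    · intro h; exact ⟨by positivity, by linarith⟩
  · have hjR : (j:ℝ) < N := by exact_mod_cast hLt
    have hjR0 : (0:ℝ) ≤ j := Nat.cast_nonneg j
    have hdiv : (2 * π * (j : ℝ) / N) / (2 * π) = (j : ℝ) / N := by
      field_simp
    have hfl : ⌊(2 * π * (j : ℝ) / N) / (2 * π)⌋ = 0 := by
      rw [hdiv, Int.floor_eq_zero_iff]
      exact ⟨div_nonneg hjR0 hNR.le, (div_lt_one hNR).2 hjR⟩
    rw [hfl]
    have hmod : (2 * π * (j : ℝ) / N - 2 * π * ((0:ℤ):ℝ)) = 2 * π * (j : ℝ) / N := by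
      push_cast; ring
    rw [hmod]
    have hlt : 2 * π * (j : ℝ) / N < 2 * π := by
      rw [div_lt_iff₀ hNR]
      nlinarith
    simp only [Set.mem_setOf_eq, Set.mem_Ico]
    constructor
    · rintro ⟨-, h⟩; linarith
    · intro h; exact ⟨⟨by positivity, hlt⟩, by linarith⟩


private lemma cos_lip (x y : ℝ) : |Real.cos x - Real.cos y| ≤ |x - y| := by
  rw [Real.cos_sub_cos]
  rw [abs_mul, abs_mul]
  have h1 := Real.abs_sin_le_abs (x := (x - y)/2)
  have h2 := abs_sin_le_one ((x + y)/2)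
  have h3 : |(x - y)/2| = |x - y|/2 := by rw [abs_div]; norm_num
  have h4 : |(-2 : ℝ)| = 2 := by norm_num
  rw [h4]
  nlinarith [abs_nonneg (Real.sin ((x+y)/2)), abs_nonneg (x - y), abs_nonneg (Real.sin ((x-y)/2))]

private lemma sin_lip (x y : ℝ) : |Real.sin x - Real.sin y| ≤ |x - y| := by
  rw [Real.sin_sub_sin]
  rw [abs_mul, abs_mul]
  have h1 := Real.abs_sin_le_abs (x := (x - y)/2)
  have h2 := abs_cos_le_one ((x + y)/2)
  have h3 : |(x - y)/2| = |x - y|/2 := by rw [abs_div]; norm_num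
  have h4 : |(2 : ℝ)| = 2 := by norm_num
  rw [h4]
  nlinarith [abs_nonneg (Real.cos ((x+y)/2)), abs_nonneg (x - y), abs_nonneg (Real.sin ((x-y)/2))]

open scoped Classical in
theorem log_prob_limit_circle (σ₀ σx σy : ℝ) :
    Tendsto
      (fun N : ℕ => ∑ j ∈ (Finset.Icc 1 N).filter (fun j : ℕ =>
          (2 * π * (j : ℝ) / N - 2 * π * ⌊(2 * π * (j : ℝ) / N) / (2 * π)⌋ : ℝ) ∈
            {α : ℝ | α ∈ Set.Ico 0 (2 * π) ∧ 0 ≤ σx * Real.cos α + σy * Real.sin α + σ₀}),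
        Real.log (1 - (σ₀ + σx * Real.cos (2 * π * (j : ℝ) / N)
          + σy * Real.sin (2 * π * (j : ℝ) / N)) / N))
      atTop
      (nhds (-(1 / (2 * π)) *
        ∫ φ in {α : ℝ | α ∈ Set.Ico 0 (2 * π) ∧ 0 ≤ σx * Real.cos α + σy * Real.sin α + σ₀},
          (σ₀ + σx * Real.cos φ + σy * Real.sin φ))) := by
  rw [integral_Bset σ₀ σx σy]
  have hπ : (0:ℝ) < π := pi_pos
  set f : ℝ → ℝ := fun x => σ₀ + σx * Real.cos x + σy * Real.sin x with hf
  set g : ℝ → ℝ := fun x => max (f x) 0 with hg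
  set L : ℝ := |σx| + |σy| with hLdef
  set C : ℝ := |σ₀| + |σx| + |σy| + 1 with hCdef
  have hC0 : (0:ℝ) < C := by positivity
  have hL0 : (0:ℝ) ≤ L := by positivity
  have hfB : ∀ x, |f x| ≤ C := by
    intro x
    simp only [hf]
    have h1 : |σx * Real.cos x| ≤ |σx| := by
      rw [abs_mul]; nlinarith [abs_cos_le_one x, abs_nonneg σx, abs_nonneg (Real.cos x)]
    have h2 : |σy * Real.sin x| ≤ |σy| := by
      rw [abs_mul]; nlinarith [abs_sin_le_one x, abs_nonneg σy, abs_nonneg (Real.sin x)]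
    calc |σ₀ + σx * Real.cos x + σy * Real.sin x|
        ≤ |σ₀ + σx * Real.cos x| + |σy * Real.sin x| := abs_add_le _ _
      _ ≤ |σ₀| + |σx * Real.cos x| + |σy * Real.sin x| := by
          linarith [abs_add_le σ₀ (σx * Real.cos x)]
      _ ≤ C := by simp only [hCdef]; linarith
  have hgLip : ∀ x y, |g x - g y| ≤ L * |x - y| := by
    intro x y
    refine le_trans (abs_max_sub_max_le_abs _ _ _) ?_
    simp only [hf]
    have e : (σ₀ + σx * Real.cos x + σy * Real.sin x) - (σ₀ + σx * Real.cos y + σy * Real.sin y)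
        = σx * (Real.cos x - Real.cos y) + σy * (Real.sin x - Real.sin y) := by ring
    rw [e]
    refine le_trans (abs_add_le _ _) ?_
    rw [abs_mul, abs_mul]
    simp only [hLdef]
    nlinarith [mul_le_mul_of_nonneg_left (cos_lip x y) (abs_nonneg σx),
      mul_le_mul_of_nonneg_left (sin_lip x y) (abs_nonneg σy)]
  set I : ℝ := ∫ x in (0:ℝ)..(2*π), g x with hI
  set R : ℕ → ℝ := fun N => ∑ j ∈ Finset.Icc 1 N, g (2*π*(j:ℝ)/N) * (2*π/N) with hRdef
  have hRt : Tendsto R atTop (nhds I) := by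
    rw [← tendsto_sub_nhds_zero_iff]
    refine squeeze_zero_norm' ?_ (tendsto_const_div_atTop_nhds_zero_nat (L * (2*π)^2))
    filter_upwards [eventually_ge_atTop 1] with N hN
    simpa [Real.norm_eq_abs] using riemann_sum_bound g L hL0 hgLip N hN
  have hTt : Tendsto (fun N => -(1/(2*π)) * R N) atTop (nhds (-(1/(2*π)) * I)) :=
    hRt.const_mul _
  set S' : ℕ → ℝ := fun N => ∑ j ∈ Finset.Icc 1 N,
      (if 0 ≤ f (2*π*(j:ℝ)/N) then Real.log (1 - f (2*π*(j:ℝ)/N)/N) else 0) with hS'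
  have hdiff : Tendsto (fun N => S' N - -(1/(2*π)) * R N) atTop (nhds 0) := by
    refine squeeze_zero_norm' ?_ (tendsto_const_div_atTop_nhds_zero_nat (2*C^2))
    filter_upwards [eventually_ge_atTop (⌈2*C⌉₊ + 1)] with N hN
    have hN1 : 1 ≤ N := le_trans (Nat.le_add_left 1 _) hN
    have hNR : (0:ℝ) < N := by exact_mod_cast hN1
    have hNne : (N:ℝ) ≠ 0 := ne_of_gt hNR
    have hCN : 2*C ≤ (N:ℝ) := by
      have h1 := Nat.le_ceil (2*C)
      have h2 : (⌈2*C⌉₊:ℝ) ≤ N := by exact_mod_cast le_trans (Nat.le_succ _) hN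
      linarith
    have hTN : -(1/(2*π)) * R N = ∑ j ∈ Finset.Icc 1 N, -(g (2*π*(j:ℝ)/N) / N) := by
      simp only [hRdef]
      rw [Finset.mul_sum]
      refine Finset.sum_congr rfl (fun j _ => ?_)
      field_simp
    simp only [hS', hTN, ← Finset.sum_sub_distrib, Real.norm_eq_abs]
    refine le_trans (Finset.abs_sum_le_sum_abs _ _) ?_
    have hterm : ∀ j ∈ Finset.Icc 1 N,
        |(if 0 ≤ f (2*π*(j:ℝ)/N) then Real.log (1 - f (2*π*(j:ℝ)/N)/N) else 0)
          - -(g (2*π*(j:ℝ)/N) / N)| ≤ 2*C^2/N^2 := by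
      intro j _
      set x : ℝ := 2*π*(j:ℝ)/N with hx
      have hux : |f x / N| ≤ C / N := by
        rw [abs_div, abs_of_pos hNR]
        gcongr
        exact hfB x
      have hCN2 : C / N ≤ 1/2 := by
        rw [div_le_iff₀ hNR]; linarith
      by_cases hpos : 0 ≤ f x
      · rw [if_pos hpos]
        have hgx : g x = f x := max_eq_left hpos
        rw [hgx]
        have hu1 : |f x / N| < 1 := lt_of_le_of_lt (le_trans hux hCN2) (by norm_num)
        have key := Real.abs_log_sub_add_sum_range_le hu1 1
        simp only [Finset.sum_range_one, pow_one] at key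
        norm_num at key
        have hEq : Real.log (1 - f x / N) - -(f x / N) = f x / N + Real.log (1 - f x / N) := by
          ring
        rw [hEq]
        refine le_trans key ?_
        have h1u : (1:ℝ)/2 ≤ 1 - |f x / N| := by linarith [le_trans hux hCN2]
        have h2 : (f x / N)^2 ≤ (C/N)^2 := by
          rw [← sq_abs]
          exact pow_le_pow_left₀ (abs_nonneg _) hux 2
        calc (f x / N)^2 / (1 - |f x / N|) ≤ (C/N)^2 / (1/2) :=
              div_le_div₀ (by positivity) h2 (by norm_num) h1u
          _ = 2*C^2/N^2 := by field_simp
      · rw [if_neg hpos]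
        have hgx : g x = 0 := max_eq_right (le_of_lt (lt_of_not_ge hpos))
        rw [hgx]
        simp only [zero_div, neg_zero, sub_zero, zero_sub, abs_neg, abs_zero]
        positivity
    refine le_trans (Finset.sum_le_sum hterm) ?_
    rw [Finset.sum_const, Nat.card_Icc, nsmul_eq_mul]
    have hcard : ((N + 1 - 1 : ℕ):ℝ) = (N:ℝ) := by simp
    rw [hcard]
    have : (N:ℝ) * (2*C^2/N^2) = 2*C^2/N := by field_simp
    linarith [le_of_eq this]
  have hfinal : Tendsto S' atTop (nhds (-(1/(2*π)) * I)) := by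
    have h := hdiff.add hTt
    have heq : (fun N => S' N - -(1/(2*π)) * R N + -(1/(2*π)) * R N) = S' := by
      funext N; ring
    rw [heq, zero_add] at h
    exact h
  refine Tendsto.congr' ?_ hfinal
  filter_upwards [eventually_ge_atTop 1] with N hN
  simp only [hS']
  rw [Finset.sum_filter]
  refine Finset.sum_congr rfl (fun j hj => ?_)
  obtain ⟨hj1, hj2⟩ := Finset.mem_Icc.mp hj
  have hcond := cond_iff σ₀ σx σy N j hj1 hj2
  simp only [hf]
  exact if_congr hcond.symm rfl rfl
end

section
/- Let $\sigma_0 > 0$ and $\sigma_x, \sigma_y \in \mathbb{R}$ satisfy $\sigma_x^2 + \sigma_y^2 \ge \sigma_0^2$. Set $\varphi_\sigma = \arccos\big(-\sigma_0/\sqrt{\sigma_x^2+\sigma_y^2}\big)$ and $B^+ = \{\varphi \in [0,2\pi) : \sigma_x\cos\varphi + \sigma_y\sin\varphi + \sigma_0 \ge 0\}$. Then $\frac{1}{2\pi\sigma_0}\int_{B^+} \big(\sigma_x\cos\varphi + \sigma_y\sin\varphi + \sigma_0\big)\,d\varphi = \frac{1}{\pi}\big(\varphi_\sigma - \tan\varphi_\sigma\big)$.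 -/
open Real MeasureTheory

theorem arc_integral_calA (σ₀ σx σy : ℝ) (h₀ : 0 < σ₀) (h : σ₀ ^ 2 ≤ σx ^ 2 + σy ^ 2) :
    (1 / (2 * π * σ₀)) *
      (∫ φ in {φ : ℝ | φ ∈ Set.Ico 0 (2 * π) ∧ 0 ≤ σx * Real.cos φ + σy * Real.sin φ + σ₀},
        (σx * Real.cos φ + σy * Real.sin φ + σ₀))
    = (1 / π) * (Real.arccos (-σ₀ / Real.sqrt (σx ^ 2 + σy ^ 2))
        - Real.tan (Real.arccos (-σ₀ / Real.sqrt (σx ^ 2 + σy ^ 2)))) := by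
  have hr2 : 0 < σx ^ 2 + σy ^ 2 := lt_of_lt_of_le (by positivity) h
  set r := Real.sqrt (σx ^ 2 + σy ^ 2) with hr_def
  have hr : 0 < r := Real.sqrt_pos.2 hr2
  have hrsq : r ^ 2 = σx ^ 2 + σy ^ 2 := Real.sq_sqrt hr2.le
  have hσr : σ₀ ≤ r := by nlinarith
  set z : ℂ := ⟨σx, σy⟩ with hz
  have habs : ‖z‖ = r := by
    rw [Complex.norm_def, Complex.normSq_mk, hr_def]
    congr 1; ring
  have hz0 : z ≠ 0 := by
    intro h0
    rw [h0, norm_zero] at habs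
    linarith
  set α := Complex.arg z with hα
  have hcosα : r * Real.cos α = σx := by
    rw [← habs]; exact Complex.norm_mul_cos_arg z
  have hsinα : r * Real.sin α = σy := by
    rw [← habs]; exact Complex.norm_mul_sin_arg z
  set c : ℝ := -σ₀ / r with hc_def
  have hc0 : c < 0 := div_neg_of_neg_of_pos (by linarith) hr
  have hc1 : -1 ≤ c := by
    rw [hc_def, le_div_iff₀ hr]; nlinarith
  have hrc : r * c + σ₀ = 0 := by
    rw [hc_def]; field_simp; ring
  set φσ := Real.arccos c with hφσ_def
  have hcosφσ : Real.cos φσ = c := Real.cos_arccos hc1 (by linarith)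
  have hφσ_nonneg : 0 ≤ φσ := Real.arccos_nonneg c
  have hφσ_le : φσ ≤ π := Real.arccos_le_pi c
  -- the integrand rewritten
  have hg : ∀ φ : ℝ, σx * Real.cos φ + σy * Real.sin φ + σ₀ = r * Real.cos (φ - α) + σ₀ := by
    intro φ
    rw [Real.cos_sub, ← hcosα, ← hsinα]
    ring
  set f : ℝ → ℝ := fun θ => max (r * Real.cos θ + σ₀) 0 with hf_def
  have hf_cont : Continuous f :=
    ((continuous_const.mul Real.continuous_cos).add continuous_const).max continuous_const
  have hf_per : Function.Periodic f (2 * π) := by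
    intro x; simp [hf_def, Real.cos_add_two_pi]
  have hf_int : ∀ a b : ℝ, IntervalIntegrable f volume a b := fun a b =>
    hf_cont.intervalIntegrable a b
  -- step 1: set integral to integral of f ∘ (· - α) over Ico
  have hmeas : MeasurableSet {φ : ℝ | 0 ≤ σx * Real.cos φ + σy * Real.sin φ + σ₀} := by
    apply measurableSet_le measurable_const
    exact (((continuous_const.mul Real.continuous_cos).add
      (continuous_const.mul Real.continuous_sin)).add continuous_const).measurable
  have hset : {φ : ℝ | φ ∈ Set.Ico 0 (2 * π) ∧ 0 ≤ σx * Real.cos φ + σy * Real.sin φ + σ₀}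
      = Set.Ico 0 (2 * π) ∩ {φ : ℝ | 0 ≤ σx * Real.cos φ + σy * Real.sin φ + σ₀} := rfl
  have step1 : (∫ φ in {φ : ℝ | φ ∈ Set.Ico 0 (2 * π) ∧
        0 ≤ σx * Real.cos φ + σy * Real.sin φ + σ₀},
        (σx * Real.cos φ + σy * Real.sin φ + σ₀))
      = ∫ φ in Set.Ico 0 (2 * π), f (φ - α) := by
    rw [hset, ← MeasureTheory.setIntegral_indicator hmeas]
    apply MeasureTheory.setIntegral_congr_fun measurableSet_Ico
    intro φ _
    simp only [Set.indicator_apply, Set.mem_setOf_eq, hf_def]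
    rw [← hg φ]
    split_ifs with hpos
    · exact (max_eq_left hpos).symm
    · exact (max_eq_right (le_of_not_ge hpos)).symm
  -- step 2: to interval integral and shift by periodicity
  have h2π : (0:ℝ) < 2 * π := by positivity
  have step2 : (∫ φ in Set.Ico 0 (2 * π), f (φ - α)) = ∫ θ in (-π)..π, f θ := by
    rw [MeasureTheory.integral_Ico_eq_integral_Ioo,
      ← MeasureTheory.integral_Ioc_eq_integral_Ioo,
      ← intervalIntegral.integral_of_le h2π.le,
      intervalIntegral.integral_comp_sub_right f α]
    have h1 : (0:ℝ) - α = -α := by ring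
    have h2 : 2 * π - α = -α + 2 * π := by ring
    rw [h1, h2, hf_per.intervalIntegral_add_eq (-α) (-π)]
    congr 1; ring
  -- step 3: split and evaluate
  have hzero_right : (∫ θ in φσ..π, f θ) = 0 := by
    rw [intervalIntegral.integral_congr (g := fun _ => (0:ℝ))]
    · simp
    · intro θ hθ
      rw [Set.uIcc_of_le hφσ_le] at hθ
      have hcle : Real.cos θ ≤ c := by
        rw [← hcosφσ]
        exact Real.cos_le_cos_of_nonneg_of_le_pi hφσ_nonneg hθ.2 hθ.1
      simp only [hf_def]
      have : r * Real.cos θ + σ₀ ≤ 0 := by nlinarith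
      exact max_eq_right this
  have hzero_left : (∫ θ in (-π)..(-φσ), f θ) = 0 := by
    rw [intervalIntegral.integral_congr (g := fun _ => (0:ℝ))]
    · simp
    · intro θ hθ
      rw [Set.uIcc_of_le (by linarith : -π ≤ -φσ)] at hθ
      have hcle : Real.cos θ ≤ c := by
        rw [← Real.cos_neg θ, ← hcosφσ]
        exact Real.cos_le_cos_of_nonneg_of_le_pi hφσ_nonneg (by linarith [hθ.1]) (by linarith [hθ.2])
      simp only [hf_def]
      have : r * Real.cos θ + σ₀ ≤ 0 := by nlinarith
      exact max_eq_right this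
  have hmid : (∫ θ in (-φσ)..φσ, f θ) = 2 * r * Real.sin φσ + 2 * σ₀ * φσ := by
    have heq : (∫ θ in (-φσ)..φσ, f θ) = ∫ θ in (-φσ)..φσ, (r * Real.cos θ + σ₀) := by
      apply intervalIntegral.integral_congr
      intro θ hθ
      rw [Set.uIcc_of_le (by linarith : -φσ ≤ φσ)] at hθ
      have hcge : c ≤ Real.cos θ := by
        rw [← hcosφσ, ← Real.cos_abs θ]
        apply Real.cos_le_cos_of_nonneg_of_le_pi (abs_nonneg θ) hφσ_le
        rw [abs_le]; exact hθ
      simp only [hf_def]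
      have : 0 ≤ r * Real.cos θ + σ₀ := by nlinarith
      exact max_eq_left this
    rw [heq, intervalIntegral.integral_add (f := fun θ => r * Real.cos θ) ((continuous_const.mul
      Real.continuous_cos).intervalIntegrable _ _) (intervalIntegrable_const),
      intervalIntegral.integral_const_mul, integral_cos,
      intervalIntegral.integral_const]
    rw [Real.sin_neg]
    simp only [smul_eq_mul]
    ring
  have hsplit : (∫ θ in (-π)..π, f θ) = 2 * r * Real.sin φσ + 2 * σ₀ * φσ := by
    rw [← intervalIntegral.integral_add_adjacent_intervals (hf_int (-π) (-φσ)) (hf_int (-φσ) π),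
      ← intervalIntegral.integral_add_adjacent_intervals (hf_int (-φσ) φσ) (hf_int φσ π),
      hzero_left, hzero_right, hmid]
    ring
  -- finish
  rw [step1, step2, hsplit]
  have htan : Real.tan φσ = Real.sin φσ / c := by
    rw [Real.tan_eq_sin_div_cos, hcosφσ]
  rw [htan]
  have hπ : π ≠ 0 := Real.pi_ne_zero
  rw [hc_def]
  field_simp [h₀.ne', hr.ne']
  ring
end

section
/- Let $\vartheta_1,\vartheta_2,\vartheta_3 \in (0,\pi)$ with $\vartheta_1+\vartheta_2+\vartheta_3 = 2\pi$ and not all equal to $2\pi/3$. Set $c_i = \cot(\vartheta_i/2)$ (so $c_i > 0$), $\lambda = \sqrt{(c_1+c_2+c_3)^2 - 3} > 0$, and with indices in the cyclic group $\mathbb{Z}_3$ define $a_i = \dfrac{c_i(c_1+c_2+c_3) - (c_1^2+c_2^2+c_3^2)}{(c_{i-1}+c_{i+1})\lambda}$ and $b_i = \dfrac{c_{i-1}-c_{i+1}}{(c_{i-1}+c_{i+1})\lambda}$. Then for each $i \in \{1,2,3\}$: (a) $a_i^2 + b_i^2 = 1$; (b) $a_{i+1} b_{i-1} - a_{i-1}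 b_{i+1} = \sin\vartheta_i$; (c) $b_{i+1} b_{i-1} + a_{i+1} a_{i-1} = \cos\vartheta_i$. -/
open Real

lemma key_alg (c0 c1 c2 lam θ : ℝ) (h21 : c2 + c1 ≠ 0) (h02 : c0 + c2 ≠ 0) (h10 : c1 + c0 ≠ 0)
    (hP : c0*c1 + c1*c2 + c2*c0 = 1) (hlamne : lam ≠ 0)
    (hlam2 : lam^2 = c0^2 + c1^2 + c2^2 - 1)
    (hs : Real.sin θ = 2*c0/(1+c0^2)) (hcθ : Real.cos θ = (c0^2-1)/(1+c0^2)) :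
    ((c0*(c0+c1+c2) - (c0^2+c1^2+c2^2))/((c2+c1)*lam))^2
      + ((c2-c1)/((c2+c1)*lam))^2 = 1
    ∧ ((c1*(c0+c1+c2)-(c0^2+c1^2+c2^2))/((c0+c2)*lam)) * ((c1-c0)/((c1+c0)*lam))
      - ((c2*(c0+c1+c2)-(c0^2+c1^2+c2^2))/((c1+c0)*lam)) * ((c0-c2)/((c0+c2)*lam))
        = Real.sin θ
    ∧ ((c0-c2)/((c0+c2)*lam)) * ((c1-c0)/((c1+c0)*lam))
      + ((c1*(c0+c1+c2)-(c0^2+c1^2+c2^2))/((c0+c2)*lam))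
        * ((c2*(c0+c1+c2)-(c0^2+c1^2+c2^2))/((c1+c0)*lam))
        = Real.cos θ := by
  have hpos : (1:ℝ) + c0^2 ≠ 0 := by positivity
  have hD : ((c0+c2)*lam) * ((c1+c0)*lam) ≠ 0 :=
    mul_ne_zero (mul_ne_zero h02 hlamne) (mul_ne_zero h10 hlamne)
  refine ⟨?_, ?_, ?_⟩
  · rw [div_pow, div_pow, ← add_div,
      div_eq_one_iff_eq (pow_ne_zero 2 (mul_ne_zero h21 hlamne))]
    linear_combination (-2*c2^2 - 2*c1^2) * hP - (c2+c1)^2 * hlam2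
  · rw [hs, div_mul_div_comm, div_mul_div_comm,
      show ((c1+c0)*lam)*((c0+c2)*lam) = ((c0+c2)*lam)*((c1+c0)*lam) from by ring,
      div_sub_div_same, div_eq_div_iff hD hpos]
    linear_combination (-2*c0*c1*c2 - 2*c0^2*c2 - 2*c0^2*c1 - 2*c0^3) * hlam2
      + (-2*c0*c2^2 - 2*c0*c1^2 - 4*c0^3) * hP
  · rw [hcθ, div_mul_div_comm, div_mul_div_comm, ← add_div,
      div_eq_div_iff hD hpos]
    linear_combination (c1*c2 + c0*c2 + c0*c1 + c0^2 - c0^2*c1*c2 - c0^3*c2 - c0^3*c1 - c0^4) * hlam2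
      + (2*c1*c2 + 2*c0^2 - 2*c0^2*c2^2 + 2*c0^2*c1*c2 - 2*c0^2*c1^2 - 2*c0^4) * hP

lemma half_mem {θ : ℝ} (h : θ ∈ Set.Ioo 0 π) : Real.sin (θ/2) > 0 ∧ Real.cos (θ/2) > 0 := by
  obtain ⟨h0, h1⟩ := h
  constructor
  · exact Real.sin_pos_of_pos_of_lt_pi (by linarith) (by nlinarith [Real.pi_pos])
  · exact Real.cos_pos_of_mem_Ioo ⟨by nlinarith [Real.pi_pos], by linarith⟩

lemma cot_facts {θ : ℝ} (h : θ ∈ Set.Ioo 0 π) :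
    0 < Real.cot (θ/2)
    ∧ Real.sin θ = 2 * Real.cot (θ/2) / (1 + Real.cot (θ/2)^2)
    ∧ Real.cos θ = (Real.cot (θ/2)^2 - 1) / (1 + Real.cot (θ/2)^2) := by
  obtain ⟨hs, hco⟩ := half_mem h
  have hpy : Real.sin (θ/2)^2 + Real.cos (θ/2)^2 = 1 := Real.sin_sq_add_cos_sq _
  have hsin : Real.sin θ = 2 * Real.sin (θ/2) * Real.cos (θ/2) := by
    nth_rewrite 1 [show θ = 2*(θ/2) by ring]
    exact Real.sin_two_mul _
  have hcos : Real.cos θ = 2 * Real.cos (θ/2)^2 - 1 := by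
    nth_rewrite 1 [show θ = 2*(θ/2) by ring]
    exact Real.cos_two_mul _
  rw [Real.cot_eq_cos_div_sin]
  refine ⟨div_pos hco hs, ?_, ?_⟩
  · rw [hsin]; field_simp; nlinarith [hpy]
  · rw [hcos]; field_simp; nlinarith [hpy]

lemma cot_sum {A B C : ℝ} (hC : C = π - (A+B)) (hA : Real.sin A ≠ 0) (hB : Real.sin B ≠ 0)
    (hAB : Real.sin (A+B) ≠ 0) :
    Real.cot A * Real.cot B + Real.cot B * Real.cot C + Real.cot C * Real.cot A = 1 := by
  have hpA : Real.sin A^2 + Real.cos A^2 = 1 := Real.sin_sq_add_cos_sq _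
  have hpB : Real.sin B^2 + Real.cos B^2 = 1 := Real.sin_sq_add_cos_sq _
  rw [hC, Real.cot_eq_cos_div_sin, Real.cot_eq_cos_div_sin, Real.cot_eq_cos_div_sin,
    Real.sin_pi_sub, Real.cos_pi_sub, Real.sin_add, Real.cos_add] at *
  field_simp
  ring

lemma cot_inj {x y : ℝ} (hx : x ∈ Set.Ioo 0 π) (hy : y ∈ Set.Ioo 0 π)
    (h : Real.cot (x/2) = Real.cot (y/2)) : x = y := by
  obtain ⟨hsx, hcx⟩ := half_mem hx
  obtain ⟨hsy, hcy⟩ := half_mem hy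
  have htan : Real.tan (x/2) = Real.tan (y/2) := by
    rw [Real.tan_eq_sin_div_cos, Real.tan_eq_sin_div_cos,
      div_eq_div_iff (ne_of_gt hcx) (ne_of_gt hcy)]
    rw [Real.cot_eq_cos_div_sin, Real.cot_eq_cos_div_sin,
      div_eq_div_iff (ne_of_gt hsx) (ne_of_gt hsy)] at h
    linarith
  have := Real.injOn_tan
    ⟨by nlinarith [Real.pi_pos, hx.1, hx.2], by nlinarith [hx.1, hx.2, Real.pi_pos]⟩
    ⟨by nlinarith [Real.pi_pos, hy.1, hy.2], by nlinarith [hy.1, hy.2, Real.pi_pos]⟩ htan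
  linarith

theorem ab_trig_identities (ϑ : ZMod 3 → ℝ)
    (hϑ : ∀ i, ϑ i ∈ Set.Ioo 0 π)
    (hsum : ϑ 0 + ϑ 1 + ϑ 2 = 2 * π)
    (hne : ¬ ∀ i, ϑ i = 2 * π / 3)
    (c : ZMod 3 → ℝ) (hc : ∀ i, c i = Real.cot (ϑ i / 2))
    (lam : ℝ) (hlam : lam = Real.sqrt ((c 0 + c 1 + c 2) ^ 2 - 3))
    (a b : ZMod 3 → ℝ)
    (ha : ∀ i, a i = (c i * (c 0 + c 1 + c 2) - (c 0 ^ 2 + c 1 ^ 2 + c 2 ^ 2))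
      / ((c (i - 1) + c (i + 1)) * lam))
    (hb : ∀ i, b i = (c (i - 1) - c (i + 1)) / ((c (i - 1) + c (i + 1)) * lam)) :
    ∀ i, a i ^ 2 + b i ^ 2 = 1
      ∧ a (i + 1) * b (i - 1) - a (i - 1) * b (i + 1) = Real.sin (ϑ i)
      ∧ b (i + 1) * b (i - 1) + a (i + 1) * a (i - 1) = Real.cos (ϑ i) := by
  -- basic facts
  have hcpos : ∀ i, 0 < c i := fun i => (hc i) ▸ (cot_facts (hϑ i)).1
  have hsin : ∀ i, Real.sin (ϑ i) = 2 * c i / (1 + (c i)^2) := by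
    intro i; rw [hc i]; exact (cot_facts (hϑ i)).2.1
  have hcosf : ∀ i, Real.cos (ϑ i) = ((c i)^2 - 1) / (1 + (c i)^2) := by
    intro i; rw [hc i]; exact (cot_facts (hϑ i)).2.2
  -- cotangent identity
  have hC : ϑ 2 / 2 = π - (ϑ 0 / 2 + ϑ 1 / 2) := by linarith
  have hP : c 0 * c 1 + c 1 * c 2 + c 2 * c 0 = 1 := by
    rw [hc 0, hc 1, hc 2]
    refine cot_sum hC (ne_of_gt (half_mem (hϑ 0)).1) (ne_of_gt (half_mem (hϑ 1)).1) ?_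
    have := (half_mem (hϑ 2)).1
    rw [hC, Real.sin_pi_sub] at this
    exact ne_of_gt this
  -- not all equal
  have hne' : ¬ (c 0 = c 1 ∧ c 1 = c 2) := by
    rintro ⟨h01, h12⟩
    have e01 : ϑ 0 = ϑ 1 := cot_inj (hϑ 0) (hϑ 1) (by rw [← hc 0, ← hc 1]; exact h01)
    have e12 : ϑ 1 = ϑ 2 := cot_inj (hϑ 1) (hϑ 2) (by rw [← hc 1, ← hc 2]; exact h12)
    have t0 : ϑ 0 = 2 * π / 3 := by linarith
    have t1 : ϑ 1 = 2 * π / 3 := by linarith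
    have t2 : ϑ 2 = 2 * π / 3 := by linarith
    apply hne
    intro i
    have hall : ∀ j : ZMod 3, j = 0 ∨ j = 1 ∨ j = 2 := by decide
    rcases hall i with rfl | rfl | rfl
    · exact t0
    · exact t1
    · exact t2
  -- lam facts
  have hQpos : 0 < c 0 ^ 2 + c 1 ^ 2 + c 2 ^ 2 - 1 := by
    rcases lt_trichotomy (c 0 ^ 2 + c 1 ^ 2 + c 2 ^ 2 - 1) 0 with h | h | h
    · nlinarith [sq_nonneg (c 0 - c 1), sq_nonneg (c 1 - c 2), sq_nonneg (c 2 - c 0)]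
    · exfalso
      apply hne'
      constructor
      · have : (c 0 - c 1)^2 ≤ 0 := by
          nlinarith [sq_nonneg (c 1 - c 2), sq_nonneg (c 2 - c 0)]
        nlinarith [sq_nonneg (c 0 - c 1)]
      · have : (c 1 - c 2)^2 ≤ 0 := by
          nlinarith [sq_nonneg (c 0 - c 1), sq_nonneg (c 2 - c 0)]
        nlinarith [sq_nonneg (c 1 - c 2)]
    · exact h
  have hS3 : (c 0 + c 1 + c 2) ^ 2 - 3 = c 0 ^ 2 + c 1 ^ 2 + c 2 ^ 2 - 1 := by
    linear_combination 2 * hP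
  have hlampos : 0 < lam := by
    rw [hlam, Real.sqrt_pos, hS3]; exact hQpos
  have hlamne : lam ≠ 0 := ne_of_gt hlampos
  have hlam2 : lam ^ 2 = c 0 ^ 2 + c 1 ^ 2 + c 2 ^ 2 - 1 := by
    rw [hlam, Real.sq_sqrt (by rw [hS3]; linarith), hS3]
  have i01 : ((0:ZMod 3) + 1) = 1 := by decide
  have i0m : ((0:ZMod 3) - 1) = 2 := by decide
  have i11 : ((1:ZMod 3) + 1) = 2 := by decide
  have i1m : ((1:ZMod 3) - 1) = 0 := by decide
  have i21 : ((2:ZMod 3) + 1) = 0 := by decide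
  have i2m : ((2:ZMod 3) - 1) = 1 := by decide
  intro i
  have hall : ∀ j : ZMod 3, j = 0 ∨ j = 1 ∨ j = 2 := by decide
  rcases hall i with rfl | rfl | rfl
  · have key := key_alg (c 0) (c 1) (c 2) lam (ϑ 0)
      (by linarith [hcpos 1, hcpos 2]) (by linarith [hcpos 0, hcpos 2])
      (by linarith [hcpos 0, hcpos 1])
      (by linear_combination hP) hlamne (by linear_combination hlam2)
      (hsin 0) (hcosf 0)
    simp only [i01, i0m]
    rw [ha 0, ha 1, ha 2, hb 0, hb 1, hb 2]
    simp only [i01, i0m, i11, i1m, i21, i2m]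
    refine ⟨by linear_combination key.1, by linear_combination key.2.1,
      by linear_combination key.2.2⟩
  · have key := key_alg (c 1) (c 2) (c 0) lam (ϑ 1)
      (by linarith [hcpos 0, hcpos 2]) (by linarith [hcpos 0, hcpos 1])
      (by linarith [hcpos 1, hcpos 2])
      (by linear_combination hP) hlamne (by linear_combination hlam2)
      (hsin 1) (hcosf 1)
    simp only [i11, i1m]
    rw [ha 0, ha 1, ha 2, hb 0, hb 1, hb 2]
    simp only [i01, i0m, i11, i1m, i21, i2m]
    refine ⟨by linear_combination key.1, by linear_combination key.2.1,
      by linear_combination key.2.2⟩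
  · have key := key_alg (c 2) (c 0) (c 1) lam (ϑ 2)
      (by linarith [hcpos 0, hcpos 1]) (by linarith [hcpos 1, hcpos 2])
      (by linarith [hcpos 0, hcpos 2])
      (by linear_combination hP) hlamne (by linear_combination hlam2)
      (hsin 2) (hcosf 2)
    simp only [i21, i2m]
    rw [ha 0, ha 1, ha 2, hb 0, hb 1, hb 2]
    simp only [i01, i0m, i11, i1m, i21, i2m]
    refine ⟨by linear_combination key.1, by linear_combination key.2.1,
      by linear_combination key.2.2⟩
end

section
/- Let $\vartheta_1,\vartheta_2,\vartheta_3 \in (0,\pi)$ with $\vartheta_1+\vartheta_2+\vartheta_3 = 2\pi$; set $\varphi_1 = 0$, $\varphi_2 = \vartheta_3$, $\varphi_3 = \vartheta_3 + \vartheta_1$, $\Delta = \sin\vartheta_1 + \sin\vartheta_2 + \sin\vartheta_3$, and for $A \in \mathbb{R}^3$ define $\sigma_0(A) = (A_1\sin\vartheta_1 + A_2\sin\vartheta_2 + A_3\sin\vartheta_3)/\Delta$, $\sigma_x(A) = \det\begin{pmatrix} A_1 & \sin\varphi_1 & 1 \\ A_2 & \sin\varphi_2 & 1 \\ A_3 &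 \sin\varphi_3 & 1 \end{pmatrix}/\Delta$, $\sigma_y(A) = \det\begin{pmatrix} \cos\varphi_1 & A_1 & 1 \\ \cos\varphi_2 & A_2 & 1 \\ \cos\varphi_3 & A_3 & 1 \end{pmatrix}/\Delta$. Then $\int_{B_1} e^{-\sigma_0(A)}\,dA = 8\pi\,\sin(\vartheta_1/2)\sin(\vartheta_2/2)\sin(\vartheta_3/2)$, where $B_1 = \{A \in \mathbb{R}^3 : A_1,A_2,A_3 > 0,\ \sigma_x(A)^2 + \sigma_y(A)^2 < \sigma_0(A)^2\}$. -/
open Real MeasureTheory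

lemma aux_disk_vol (c : ℝ) (hc : 0 < c) :
    volume {p : ℝ × ℝ | p.1 ^ 2 + p.2 ^ 2 < c ^ 2} = ENNReal.ofReal (π * c ^ 2) := by
  have hpre : Complex.measurableEquivRealProd ⁻¹' {p : ℝ × ℝ | p.1 ^ 2 + p.2 ^ 2 < c ^ 2}
      = Metric.ball (0 : ℂ) c := by
    ext z
    simp only [Set.mem_preimage, Set.mem_setOf_eq, Metric.mem_ball, Complex.dist_eq, sub_zero,
      Complex.measurableEquivRealProd_apply]
    constructor
    · intro h
      nlinarith [Complex.sq_norm z, Complex.normSq_apply z, norm_nonneg z]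
    · intro h
      nlinarith [Complex.sq_norm z, Complex.normSq_apply z, norm_nonneg z]
  have hmeas : MeasurableSet {p : ℝ × ℝ | p.1 ^ 2 + p.2 ^ 2 < c ^ 2} := by
    apply IsOpen.measurableSet
    apply isOpen_lt (by fun_prop) (by fun_prop)
  calc volume {p : ℝ × ℝ | p.1 ^ 2 + p.2 ^ 2 < c ^ 2}
      = volume (Complex.measurableEquivRealProd ⁻¹' {p : ℝ × ℝ | p.1 ^ 2 + p.2 ^ 2 < c ^ 2}) :=
        (Complex.volume_preserving_equiv_real_prod.measure_preimage hmeas.nullMeasurableSet).symm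
    _ = volume (Metric.ball (0 : ℂ) c) := by rw [hpre]
    _ = ENNReal.ofReal (π * c ^ 2) := by
        rw [Complex.volume_ball]
        rw [ENNReal.ofReal_mul (le_of_lt pi_pos), ← ENNReal.ofReal_pow (le_of_lt hc)]
        rw [mul_comm]
        congr 1
        rw [← NNReal.coe_real_pi, ENNReal.ofReal_coe_nnreal]

lemma aux_cone_integral :
    (∫ y in {y : ℝ × ℝ × ℝ | 0 < y.1 ∧ y.2.1 ^ 2 + y.2.2 ^ 2 < y.1 ^ 2}, Real.exp (-y.1))
      = 2 * π := by
  set K : Set (ℝ × ℝ × ℝ) := {y | 0 < y.1 ∧ y.2.1 ^ 2 + y.2.2 ^ 2 < y.1 ^ 2} with hKdef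
  have hK : MeasurableSet K := by
    apply IsOpen.measurableSet
    have : IsOpen {y : ℝ × ℝ × ℝ | y.2.1 ^ 2 + y.2.2 ^ 2 < y.1 ^ 2} :=
      isOpen_lt (by fun_prop) (by fun_prop)
    exact (isOpen_lt continuous_const continuous_fst).inter this
  have hmeasg : Measurable (K.indicator fun y : ℝ × ℝ × ℝ => ENNReal.ofReal (Real.exp (-y.1))) :=
    Measurable.indicator (by measurability) hK
  have hGamma3 : Real.Gamma 3 = 2 := by
    rw [(by norm_num : (3:ℝ) = ((2:ℕ):ℝ) + 1), Real.Gamma_nat_eq_factorial]; norm_num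
  have hval : (∫ c in Set.Ioi (0:ℝ), Real.exp (-c) * (π * c ^ 2)) = 2 * π := by
    have hcong : ∀ x ∈ Set.Ioi (0:ℝ),
        Real.exp (-x) * (π * x ^ 2) = π * (Real.exp (-x) * x ^ ((3:ℝ) - 1)) := by
      intro x hx
      rw [(by norm_num : (3:ℝ) - 1 = ((2:ℕ):ℝ)), Real.rpow_natCast]
      ring
    rw [setIntegral_congr_fun measurableSet_Ioi hcong, integral_const_mul,
      ← Real.Gamma_eq_integral (by norm_num : (0:ℝ) < 3), hGamma3]
    ring
  have hint : IntegrableOn (fun c : ℝ => Real.exp (-c) * (π * c ^ 2)) (Set.Ioi 0) := by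
    have h3 := Real.GammaIntegral_convergent (by norm_num : (0:ℝ) < 3)
    refine (h3.const_mul π).congr ?_
    filter_upwards [ae_restrict_mem measurableSet_Ioi] with x hx
    rw [(by norm_num : (3:ℝ) - 1 = ((2:ℕ):ℝ)), Real.rpow_natCast]
    ring
  have hinner : ∀ c : ℝ,
      (∫⁻ p : ℝ × ℝ, K.indicator (fun y : ℝ × ℝ × ℝ => ENNReal.ofReal (Real.exp (-y.1))) (c, p))
        = (Set.Ioi (0:ℝ)).indicator
            (fun c => ENNReal.ofReal (Real.exp (-c) * (π * c ^ 2))) c := by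
    intro c
    by_cases hc : 0 < c
    · have hD : MeasurableSet {p : ℝ × ℝ | p.1 ^ 2 + p.2 ^ 2 < c ^ 2} :=
        (isOpen_lt (by fun_prop) (by fun_prop)).measurableSet
      have heq : (fun p : ℝ × ℝ =>
          K.indicator (fun y : ℝ × ℝ × ℝ => ENNReal.ofReal (Real.exp (-y.1))) (c, p))
          = {p : ℝ × ℝ | p.1 ^ 2 + p.2 ^ 2 < c ^ 2}.indicator
              (fun _ => ENNReal.ofReal (Real.exp (-c))) := by
        funext p
        simp only [hKdef, Set.indicator_apply, Set.mem_setOf_eq]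
        by_cases hp : p.1 ^ 2 + p.2 ^ 2 < c ^ 2 <;> simp [hp, hc]
      rw [heq, lintegral_indicator hD, setLIntegral_const, aux_disk_vol c hc,
        Set.indicator_of_mem (Set.mem_Ioi.mpr hc), ← ENNReal.ofReal_mul (Real.exp_nonneg _)]
    · have h1 : ∀ p : ℝ × ℝ,
          K.indicator (fun y : ℝ × ℝ × ℝ => ENNReal.ofReal (Real.exp (-y.1))) (c, p) = 0 :=
        fun p => Set.indicator_of_notMem (fun h => hc h.1) _
      simp only [h1, lintegral_zero, Set.indicator_of_notMem (by simpa using hc : c ∉ Set.Ioi 0)]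
  have hlin : (∫⁻ y in K, ENNReal.ofReal (Real.exp (-y.1))) = ENNReal.ofReal (2 * π) := by
    rw [← lintegral_indicator hK, Measure.volume_eq_prod, lintegral_prod _ hmeasg.aemeasurable]
    calc (∫⁻ c : ℝ, ∫⁻ p : ℝ × ℝ,
            K.indicator (fun y : ℝ × ℝ × ℝ => ENNReal.ofReal (Real.exp (-y.1))) (c, p))
        = ∫⁻ c : ℝ, (Set.Ioi (0:ℝ)).indicator
            (fun c => ENNReal.ofReal (Real.exp (-c) * (π * c ^ 2))) c :=
          lintegral_congr hinner
      _ = ∫⁻ c in Set.Ioi (0:ℝ), ENNReal.ofReal (Real.exp (-c) * (π * c ^ 2)) :=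
          lintegral_indicator measurableSet_Ioi _
      _ = ENNReal.ofReal (∫ c in Set.Ioi (0:ℝ), Real.exp (-c) * (π * c ^ 2)) :=
          (ofReal_integral_eq_lintegral_ofReal hint
            (Filter.Eventually.of_forall fun c => by positivity)).symm
      _ = ENNReal.ofReal (2 * π) := by rw [hval]
  rw [integral_eq_lintegral_of_nonneg_ae (f := fun y : ℝ × ℝ × ℝ => Real.exp (-y.1))
      (Filter.Eventually.of_forall fun y => Real.exp_nonneg _)
      ((Real.continuous_exp.comp continuous_fst.neg).aestronglyMeasurable), hlin,
    ENNReal.toReal_ofReal (by positivity)]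

set_option maxHeartbeats 1000000 in
theorem p1_integral (ϑ₁ ϑ₂ ϑ₃ : ℝ)
    (h₁ : ϑ₁ ∈ Set.Ioo 0 π) (h₂ : ϑ₂ ∈ Set.Ioo 0 π) (h₃ : ϑ₃ ∈ Set.Ioo 0 π)
    (hsum : ϑ₁ + ϑ₂ + ϑ₃ = 2 * π)
    (φ₁ φ₂ φ₃ Δ : ℝ)
    (hφ₁ : φ₁ = 0) (hφ₂ : φ₂ = ϑ₃) (hφ₃ : φ₃ = ϑ₃ + ϑ₁)
    (hΔ : Δ = Real.sin ϑ₁ + Real.sin ϑ₂ + Real.sin ϑ₃)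
    (σ₀ σx σy : ℝ × ℝ × ℝ → ℝ)
    (hσ₀ : ∀ A : ℝ × ℝ × ℝ,
      σ₀ A = (A.1 * Real.sin ϑ₁ + A.2.1 * Real.sin ϑ₂ + A.2.2 * Real.sin ϑ₃) / Δ)
    (hσx : ∀ A : ℝ × ℝ × ℝ,
      σx A = Matrix.det !![A.1, Real.sin φ₁, 1;
                           A.2.1, Real.sin φ₂, 1;
                           A.2.2, Real.sin φ₃, 1] / Δ)
    (hσy : ∀ A : ℝ × ℝ × ℝ,
      σy A = Matrix.det !![Real.cos φ₁, A.1, 1;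
                           Real.cos φ₂, A.2.1, 1;
                           Real.cos φ₃, A.2.2, 1] / Δ) :
    (∫ A in {A : ℝ × ℝ × ℝ | 0 < A.1 ∧ 0 < A.2.1 ∧ 0 < A.2.2 ∧
        σx A ^ 2 + σy A ^ 2 < σ₀ A ^ 2},
      Real.exp (-(σ₀ A)))
    = 8 * π * Real.sin (ϑ₁ / 2) * Real.sin (ϑ₂ / 2) * Real.sin (ϑ₃ / 2) := by
  obtain ⟨h1a, h1b⟩ := h₁
  obtain ⟨h2a, h2b⟩ := h₂
  obtain ⟨h3a, h3b⟩ := h₃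
  have hsin1 : 0 < Real.sin ϑ₁ := Real.sin_pos_of_pos_of_lt_pi h1a h1b
  have hsin2 : 0 < Real.sin ϑ₂ := Real.sin_pos_of_pos_of_lt_pi h2a h2b
  have hsin3 : 0 < Real.sin ϑ₃ := Real.sin_pos_of_pos_of_lt_pi h3a h3b
  have hΔpos : 0 < Δ := by rw [hΔ]; linarith
  have hΔne : Δ ≠ 0 := ne_of_gt hΔpos
  have hΔ4 : Δ = 4 * Real.sin (ϑ₁ / 2) * Real.sin (ϑ₂ / 2) * Real.sin (ϑ₃ / 2) := by
    have e1 : Real.sin ϑ₁ = 2 * Real.sin (ϑ₁ / 2) * Real.cos (ϑ₁ / 2) := by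
      rw [← Real.sin_two_mul]; congr 1; ring
    have e2 : Real.sin ϑ₂ = 2 * Real.sin (ϑ₂ / 2) * Real.cos (ϑ₂ / 2) := by
      rw [← Real.sin_two_mul]; congr 1; ring
    have e3 : Real.sin ϑ₃ = 2 * Real.sin (ϑ₃ / 2) * Real.cos (ϑ₃ / 2) := by
      rw [← Real.sin_two_mul]; congr 1; ring
    have h3' : ϑ₃ / 2 = π - (ϑ₁ / 2 + ϑ₂ / 2) := by linarith
    rw [hΔ, e1, e2, e3, h3', Real.sin_pi_sub, Real.cos_pi_sub, Real.sin_add, Real.cos_add]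
    linear_combination (-2 * Real.sin (ϑ₁ / 2) * Real.cos (ϑ₁ / 2)) *
        Real.sin_sq_add_cos_sq (ϑ₂ / 2) +
      (-2 * Real.sin (ϑ₂ / 2) * Real.cos (ϑ₂ / 2)) * Real.sin_sq_add_cos_sq (ϑ₁ / 2)
  -- trig values at φ
  have hsφ1 : Real.sin φ₁ = 0 := by rw [hφ₁, Real.sin_zero]
  have hcφ1 : Real.cos φ₁ = 1 := by rw [hφ₁, Real.cos_zero]
  have hsφ2 : Real.sin φ₂ = Real.sin ϑ₃ := by rw [hφ₂]
  have hcφ2 : Real.cos φ₂ = Real.cos ϑ₃ := by rw [hφ₂]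
  have hφ3' : φ₃ = 2 * π - ϑ₂ := by rw [hφ₃]; linarith
  have hsφ3 : Real.sin φ₃ = -Real.sin ϑ₂ := by rw [hφ3', Real.sin_two_pi_sub]
  have hcφ3 : Real.cos φ₃ = Real.cos ϑ₂ := by rw [hφ3', Real.cos_two_pi_sub]
  have hs1 : Real.sin ϑ₁ = -(Real.sin ϑ₂ * Real.cos ϑ₃ + Real.cos ϑ₂ * Real.sin ϑ₃) := by
    have h : ϑ₁ = 2 * π - (ϑ₂ + ϑ₃) := by linarith
    rw [h, Real.sin_two_pi_sub, Real.sin_add]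
  -- the linear change of variables
  let Lf : (ℝ × ℝ × ℝ) →ₗ[ℝ] (ℝ × ℝ × ℝ) :=
    { toFun := fun y => (y.2.1 * Real.cos φ₁ + y.2.2 * Real.sin φ₁ + y.1,
        y.2.1 * Real.cos φ₂ + y.2.2 * Real.sin φ₂ + y.1,
        y.2.1 * Real.cos φ₃ + y.2.2 * Real.sin φ₃ + y.1)
      map_add' := by
        intro y z
        simp only [Prod.fst_add, Prod.snd_add, Prod.mk_add_mk, Prod.mk.injEq]
        refine ⟨by ring, by ring, by ring⟩
      map_smul' := by
        intro t y
        simp only [Prod.smul_fst, Prod.smul_snd, Prod.smul_mk, smul_eq_mul, RingHom.id_apply,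
          Prod.mk.injEq]
        refine ⟨by ring, by ring, by ring⟩ }
  let L : (ℝ × ℝ × ℝ) →L[ℝ] (ℝ × ℝ × ℝ) := LinearMap.toContinuousLinearMap Lf
  have hLapp : ∀ y : ℝ × ℝ × ℝ, L y = (y.2.1 * Real.cos φ₁ + y.2.2 * Real.sin φ₁ + y.1,
      y.2.1 * Real.cos φ₂ + y.2.2 * Real.sin φ₂ + y.1,
      y.2.1 * Real.cos φ₃ + y.2.2 * Real.sin φ₃ + y.1) :=
    fun y => congrFun (LinearMap.coe_toContinuousLinearMap' Lf) y
  -- σ composed with L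
  have hσ0L : ∀ y : ℝ × ℝ × ℝ, σ₀ (L y) = y.1 := by
    intro y
    rw [hLapp, hσ₀]
    dsimp only
    rw [div_eq_iff hΔne, hsφ1, hcφ1, hsφ2, hcφ2, hsφ3, hcφ3, hΔ, hs1]
    ring
  have hσxL : ∀ y : ℝ × ℝ × ℝ, σx (L y) = y.2.1 := by
    intro y
    rw [hLapp, hσx, Matrix.det_fin_three]
    simp only [Fin.isValue, Matrix.of_apply, Matrix.cons_val', Matrix.cons_val_zero,
      Matrix.empty_val', Matrix.cons_val_fin_one, Matrix.cons_val_one, Matrix.head_cons,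
      Matrix.cons_val_two, Nat.succ_eq_add_one, Nat.reduceAdd, Matrix.tail_cons,
      Matrix.head_fin_const]
    rw [div_eq_iff hΔne, hsφ1, hcφ1, hsφ2, hcφ2, hsφ3, hcφ3, hΔ, hs1]
    ring
  have hσyL : ∀ y : ℝ × ℝ × ℝ, σy (L y) = y.2.2 := by
    intro y
    rw [hLapp, hσy, Matrix.det_fin_three]
    simp only [Fin.isValue, Matrix.of_apply, Matrix.cons_val', Matrix.cons_val_zero,
      Matrix.empty_val', Matrix.cons_val_fin_one, Matrix.cons_val_one, Matrix.head_cons,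
      Matrix.cons_val_two, Nat.succ_eq_add_one, Nat.reduceAdd, Matrix.tail_cons,
      Matrix.head_fin_const]
    rw [div_eq_iff hΔne, hsφ1, hcφ1, hsφ2, hcφ2, hsφ3, hcφ3, hΔ, hs1]
    ring
  -- L is a two-sided inverse of A ↦ (σ₀ A, σx A, σy A)
  have hinv : ∀ A : ℝ × ℝ × ℝ, L (σ₀ A, σx A, σy A) = A := by
    intro A
    have e0 := hσ₀ A
    have ex := hσx A
    have ey := hσy A
    rw [Matrix.det_fin_three] at ex ey
    simp only [Fin.isValue, Matrix.of_apply, Matrix.cons_val', Matrix.cons_val_zero,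
      Matrix.empty_val', Matrix.cons_val_fin_one, Matrix.cons_val_one, Matrix.head_cons,
      Matrix.cons_val_two, Nat.succ_eq_add_one, Nat.reduceAdd, Matrix.tail_cons,
      Matrix.head_fin_const] at ex ey
    rw [hLapp]
    refine Prod.ext ?_ (Prod.ext ?_ ?_)
    · dsimp only
      rw [e0, ex, ey, hsφ1, hcφ1, hsφ2, hcφ2, hsφ3, hcφ3]
      field_simp
      rw [hΔ, hs1]
      ring
    · dsimp only
      rw [e0, ex, ey, hsφ1, hcφ1, hsφ2, hcφ2, hsφ3, hcφ3]
      field_simp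
      rw [hΔ, hs1]
      ring
    · dsimp only
      rw [e0, ex, ey, hsφ1, hcφ1, hsφ2, hcφ2, hsφ3, hcφ3]
      field_simp
      rw [hΔ, hs1]
      ring
  -- sets
  set K : Set (ℝ × ℝ × ℝ) := {y | 0 < y.1 ∧ y.2.1 ^ 2 + y.2.2 ^ 2 < y.1 ^ 2} with hKdef
  have hKmeas : MeasurableSet K := by
    apply IsOpen.measurableSet
    have : IsOpen {y : ℝ × ℝ × ℝ | y.2.1 ^ 2 + y.2.2 ^ 2 < y.1 ^ 2} :=
      isOpen_lt (by fun_prop) (by fun_prop)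
    exact (isOpen_lt continuous_const continuous_fst).inter this
  have key : ∀ t c : ℝ, t ^ 2 < c ^ 2 → 0 < c → 0 < t + c := by
    intro t c hh1 hh2; nlinarith [sq_nonneg (t + c)]
  have hSeq : {A : ℝ × ℝ × ℝ | 0 < A.1 ∧ 0 < A.2.1 ∧ 0 < A.2.2 ∧
      σx A ^ 2 + σy A ^ 2 < σ₀ A ^ 2} = L '' K := by
    ext A
    constructor
    · rintro ⟨hA1, hA2, hA3, hcone⟩
      refine ⟨(σ₀ A, σx A, σy A), ⟨?_, ?_⟩, hinv A⟩
      · show 0 < σ₀ A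
        rw [hσ₀ A]
        apply div_pos ?_ hΔpos
        have := mul_pos hA1 hsin1
        have := mul_pos hA2 hsin2
        have := mul_pos hA3 hsin3
        linarith
      · exact hcone
    · rintro ⟨y, ⟨hy1, hy2⟩, rfl⟩
      have hcone : σx (L y) ^ 2 + σy (L y) ^ 2 < σ₀ (L y) ^ 2 := by
        rw [hσ0L, hσxL, hσyL]; exact hy2
      refine ⟨?_, ?_, ?_, hcone⟩
      · have h := key y.2.1 y.1 (by nlinarith [sq_nonneg y.2.2]) hy1
        rw [hLapp]
        dsimp only
        rw [hsφ1, hcφ1]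
        linarith
      · have ht : (y.2.1 * Real.cos ϑ₃ + y.2.2 * Real.sin ϑ₃) ^ 2 < y.1 ^ 2 := by
          nlinarith [sq_nonneg (y.2.1 * Real.sin ϑ₃ - y.2.2 * Real.cos ϑ₃),
            Real.sin_sq_add_cos_sq ϑ₃]
        have h := key _ y.1 ht hy1
        rw [hLapp]
        dsimp only
        rw [hsφ2, hcφ2]
        linarith
      · have ht : (y.2.1 * Real.cos ϑ₂ + y.2.2 * -Real.sin ϑ₂) ^ 2 < y.1 ^ 2 := by
          nlinarith [sq_nonneg (y.2.1 * Real.sin ϑ₂ + y.2.2 * Real.cos ϑ₂),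
            Real.sin_sq_add_cos_sq ϑ₂]
        have h := key _ y.1 ht hy1
        rw [hLapp]
        dsimp only
        rw [hsφ3, hcφ3]
        linarith
  have hinj : Set.InjOn L K := by
    intro y _ z _ h
    have h0 := congrArg σ₀ h
    rw [hσ0L, hσ0L] at h0
    have hx := congrArg σx h
    rw [hσxL, hσxL] at hx
    have hy := congrArg σy h
    rw [hσyL, hσyL] at hy
    exact Prod.ext h0 (Prod.ext hx hy)
  have hdet : |(L : (ℝ × ℝ × ℝ) →L[ℝ] (ℝ × ℝ × ℝ)).det| = Δ := by
    have hld : LinearMap.det Lf = Δ := by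
      let E3 : (ℝ × ℝ × ℝ) ≃ₗ[ℝ] (Fin 3 → ℝ) :=
        { toFun := fun p => ![p.1, p.2.1, p.2.2]
          invFun := fun v => (v 0, v 1, v 2)
          map_add' := by intro p q; funext i; fin_cases i <;> simp
          map_smul' := by intro t p; funext i; fin_cases i <;> simp
          left_inv := by intro p; rfl
          right_inv := by intro v; funext i; fin_cases i <;> simp }
      let B : Module.Basis (Fin 3) ℝ (ℝ × ℝ × ℝ) := Module.Basis.ofEquivFun E3
      rw [← LinearMap.det_toMatrix B]
      have hM : LinearMap.toMatrix B B Lf =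
          !![1, Real.cos φ₁, Real.sin φ₁; 1, Real.cos φ₂, Real.sin φ₂;
             1, Real.cos φ₃, Real.sin φ₃] := by
        ext i j
        fin_cases i <;> fin_cases j <;>
          simp [LinearMap.toMatrix_apply, B, Module.Basis.ofEquivFun_repr_apply, Module.Basis.coe_ofEquivFun,
            (show ∀ v, E3.symm v = (v 0, v 1, v 2) from fun v => rfl),
            (show ∀ p, E3 p = ![p.1, p.2.1, p.2.2] from fun p => rfl), Lf,
            Finsupp.linearEquivFunOnFinite, Finsupp.equivFunOnFinite_symm_coe,
            Matrix.vecHead, Matrix.vecTail]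
      rw [hM, Matrix.det_fin_three]
      simp only [Fin.isValue, Matrix.of_apply, Matrix.cons_val', Matrix.cons_val_zero,
        Matrix.empty_val', Matrix.cons_val_fin_one, Matrix.cons_val_one, Matrix.head_cons,
        Matrix.cons_val_two, Nat.succ_eq_add_one, Nat.reduceAdd, Matrix.tail_cons,
        Matrix.head_fin_const]
      rw [hsφ1, hcφ1, hsφ2, hcφ2, hsφ3, hcφ3, hΔ, hs1]
      ring
    have hcd : (L : (ℝ × ℝ × ℝ) →L[ℝ] (ℝ × ℝ × ℝ)).det = LinearMap.det Lf := rfl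
    rw [hcd, hld]
    exact abs_of_pos hΔpos
  haveI : (volume : Measure (ℝ × ℝ × ℝ)).IsAddHaarMeasure := by
    rw [Measure.volume_eq_prod]; infer_instance
  calc (∫ A in {A : ℝ × ℝ × ℝ | 0 < A.1 ∧ 0 < A.2.1 ∧ 0 < A.2.2 ∧
          σx A ^ 2 + σy A ^ 2 < σ₀ A ^ 2}, Real.exp (-(σ₀ A)))
      = ∫ A in L '' K, Real.exp (-(σ₀ A)) := by rw [hSeq]
    _ = ∫ y in K, |(L : (ℝ × ℝ × ℝ) →L[ℝ] (ℝ × ℝ × ℝ)).det| • Real.exp (-(σ₀ (L y))) :=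
        integral_image_eq_integral_abs_det_fderiv_smul volume hKmeas
          (fun x _ => L.hasFDerivAt.hasFDerivWithinAt) hinj _
    _ = ∫ y in K, Δ * Real.exp (-y.1) := by
        refine setIntegral_congr_fun hKmeas fun y _ => ?_
        rw [hσ0L, hdet, smul_eq_mul]
    _ = Δ * (2 * π) := by
        rw [integral_const_mul, hKdef, aux_cone_integral]
    _ = 8 * π * Real.sin (ϑ₁ / 2) * Real.sin (ϑ₂ / 2) * Real.sin (ϑ₃ / 2) := by
        rw [hΔ4]; ring
end
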